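/- Position can beat number: for every ε > 0 there exist integers c ≥ 1 and N such that for all n ≥ N the game J^c_n satisfies |L(J^c_n)| / |V(J^c_n)| ≤ ε and s^L_2(J^c_n) / |V(J^c_n)| ≥ 1 − ε; that is, the initial proportion of Left vertices is at most ε while, even playing second, Left wins a proportion of at least 1 − ε of all vertices. -/

import Mathlib

namespace Influence

open Finset

/-- A position of the game `influence`: a finite directed graph with vertex set `V`,
arc set `A`, and the set `left` of Left (black) vertices; Right's vertices are `V \ left`. -/
structure Pos (α : Type) [DecidableEq α] where
  V : Finset α
  A : Finset (α × α)
  left : Finset α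

variable {α : Type} [DecidableEq α]

namespace Pos

/-- The set of Right vertices. -/
def R (G : Pos α) : Finset α := G.V \ G.left

/-- Well-formedness: arcs join vertices, and Left vertices are vertices. -/
def WF (G : Pos α) : Prop :=
  (∀ p ∈ G.A, p.1 ∈ G.V ∧ p.2 ∈ G.V) ∧ G.left ⊆ G.V

open Classical in
/-- `Succ G x`: vertices reachable from `x` by a directed path (including `x` itself). -/
noncomputable def Succ (G : Pos α) (x : α) : Finset α :=
  G.V.filter (fun z => Relation.ReflTransGen (fun a b => (a, b) ∈ G.A) x z)

open Classical in
/-- `Pred G y`: vertices from which `y` is reachable by a directed path (including `y`). -/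
noncomputable def Pred (G : Pos α) (y : α) : Finset α :=
  G.V.filter (fun z => Relation.ReflTransGen (fun a b => (a, b) ∈ G.A) z y)

open Classical in
noncomputable def ForcL (G : Pos α) : Finset α :=
  G.left.filter (fun x => G.Succ x ⊆ G.left)

open Classical in
noncomputable def ForcR (G : Pos α) : Finset α :=
  G.R.filter (fun y => G.Pred y ⊆ G.R)

noncomputable def Forc (G : Pos α) : Finset α := G.ForcL ∪ G.ForcR

/-- A relevant position: no forced vertices. -/
def Relevant (G : Pos α) : Prop := G.Forc = ∅

/-- The induced subgraph `G ∖ S` on `V(G) \ S`. -/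
def erase (G : Pos α) (S : Finset α) : Pos α :=
  ⟨G.V \ S, G.A.filter (fun p => p.1 ∈ G.V \ S ∧ p.2 ∈ G.V \ S), G.left \ S⟩

open Classical in
/-- The set of vertices removed when playing `x`:  for `x ∈ L`,
`Rmv(G,x) = Succ(G,x) ∪ Forc(G ∖ Succ(G,x))`; for `y ∈ R`,
`Rmv(G,y) = Pred(G,y) ∪ Forc(G ∖ Pred(G,y))`. -/
noncomputable def Rmv (G : Pos α) (x : α) : Finset α :=
  if x ∈ G.left then G.Succ x ∪ (G.erase (G.Succ x)).Forc
  else G.Pred x ∪ (G.erase (G.Pred x)).Forc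

/-- The resulting relevant position `G_x` after the move `x`. -/
noncomputable def move (G : Pos α) (x : α) : Pos α := G.erase (G.Rmv x)

mutual
/-- Auxiliary (fuel-indexed) score of Left playing first. -/
noncomputable def sL1Aux : ℕ → Pos α → ℕ
  | 0, _ => 0
  | k + 1, G =>
      if G.left.Nonempty then
        G.left.sup (fun x => (G.Rmv x).card + sL2Aux k (G.move x))
      else 0

/-- Auxiliary (fuel-indexed) score of Left playing second. -/
noncomputable def sL2Aux : ℕ → Pos α → ℕ
  | 0, _ => 0
  | k + 1, G =>
      if h : G.R.Nonempty then G.R.inf' h (fun y => sL1Aux k (G.move y))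
      else 0
end

mutual
/-- Auxiliary (fuel-indexed) score of Right playing first. -/
noncomputable def sR1Aux : ℕ → Pos α → ℕ
  | 0, _ => 0
  | k + 1, G =>
      if G.R.Nonempty then
        G.R.sup (fun y => (G.Rmv y).card + sR2Aux k (G.move y))
      else 0

/-- Auxiliary (fuel-indexed) score of Right playing second. -/
noncomputable def sR2Aux : ℕ → Pos α → ℕ
  | 0, _ => 0
  | k + 1, G =>
      if h : G.left.Nonempty then G.left.inf' h (fun x => sR1Aux k (G.move x))
      else 0
end

/-- `s^L_1(G)`: the score of Left when Left plays first (optimal play). -/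
noncomputable def sL1 (G : Pos α) : ℕ := sL1Aux G.V.card G

/-- `s^L_2(G)`: the score of Left when Right plays first (optimal play). -/
noncomputable def sL2 (G : Pos α) : ℕ := sL2Aux G.V.card G

/-- `s^R_1(G)`: the score of Right when Right plays first (optimal play). -/
noncomputable def sR1 (G : Pos α) : ℕ := sR1Aux G.V.card G

/-- `s^R_2(G)`: the score of Right when Left plays first (optimal play). -/
noncomputable def sR2 (G : Pos α) : ℕ := sR2Aux G.V.card G

/-- The Left score `Ls(G) = s^L_1(G) - s^R_2(G)`. -/
noncomputable def Ls (G : Pos α) : ℤ := (G.sL1 : ℤ) - (G.sR2 : ℤ)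

/-- The Right score `Rs(G) = s^L_2(G) - s^R_1(G)`. -/
noncomputable def Rs (G : Pos α) : ℤ := (G.sL2 : ℤ) - (G.sR1 : ℤ)

/-- Disjoint union (game sum) of two positions. -/
def union (G G' : Pos α) : Pos α := ⟨G.V ∪ G'.V, G.A ∪ G'.A, G.left ∪ G'.left⟩

/-- The empty position. -/
protected def empty : Pos α := ⟨∅, ∅, ∅⟩

end Pos

/-- The sum of a finite list of positions. -/
def sumList (l : List (Pos α)) : Pos α := l.foldr Pos.union Pos.empty

open Classical in
/-- `G` is a segment: its vertex set is a set of at least two consecutive integers,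
Left's vertices are the even ones, Right's the odd ones, and there is an arc from each
even vertex to each of its (odd) neighbours `±1` lying in the vertex set. -/
def IsSegment (G : Pos ℤ) : Prop :=
  2 ≤ G.V.card ∧
  (∀ i j k : ℤ, i ∈ G.V → j ∈ G.V → i ≤ k → k ≤ j → k ∈ G.V) ∧
  G.left = G.V.filter (fun n => Even n) ∧
  G.A = (G.V ×ˢ G.V).filter (fun p => Even p.1 ∧ (p.2 = p.1 + 1 ∨ p.2 = p.1 - 1))

/-- `G` is the finite disjoint union (game sum) of the list `l` of segments. -/
def IsSegUnion (G : Pos ℤ) (l : List (Pos ℤ)) : Prop :=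
  (∀ H ∈ l, IsSegment H) ∧
  l.Pairwise (fun H H' => Disjoint H.V H'.V) ∧
  G = sumList l


open Classical in
/-- `G` is an alternated cycle: obtained from a segment `S` with an even number of
vertices by adding the arc `(x, y)` where `x` is the endpoint of `S` in `L` (even) and
`y` the endpoint in `R` (odd). -/
def IsAltCycle (G : Pos ℤ) : Prop :=
  ∃ (S : Pos ℤ) (x y : ℤ), IsSegment S ∧ Even S.V.card ∧
    x ∈ S.V ∧ y ∈ S.V ∧ Even x ∧ ¬ Even y ∧
    (∀ z ∈ S.V, min x y ≤ z ∧ z ≤ max x y) ∧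
    G.V = S.V ∧ G.left = S.left ∧ G.A = insert (x, y) S.A

open Classical in
/-- `T` is (a copy of) the oriented tree `T_n^c`: a rooted tree of depth `n+1`, all arcs
oriented from parent to child, in which every vertex at level `k ≤ n-1` has exactly `3`
children, every vertex at level `n` has exactly `c` children, the leaves (level `n+1`)
are the Right vertices and all other vertices are Left vertices. -/
def IsTnc (n c : ℕ) (T : Pos α) : Prop :=
  T.WF ∧ ∃ lvl : α → ℕ,
    (∀ v ∈ T.V, lvl v ≤ n + 1) ∧
    T.left = T.V.filter (fun v => lvl v ≤ n) ∧
    (∃! r, r ∈ T.V ∧ lvl r = 0) ∧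
    (∀ p ∈ T.A, lvl p.2 = lvl p.1 + 1) ∧
    (∀ v ∈ T.V, 0 < lvl v → ∃! u, (u, v) ∈ T.A) ∧
    (∀ v ∈ T.V, lvl v < n → (T.V.filter (fun w => (v, w) ∈ T.A)).card = 3) ∧
    (∀ v ∈ T.V, lvl v = n → (T.V.filter (fun w => (v, w) ∈ T.A)).card = c)

/-- `J` is (a copy of) `J_n^c`, the disjoint union of two disjoint copies of `T_n^c`. -/
def IsJnc (n c : ℕ) (J : Pos α) : Prop :=
  ∃ T1 T2 : Pos α, IsTnc n c T1 ∧ IsTnc n c T2 ∧ Disjoint T1.V T2.V ∧ J = T1.union T2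


/-! ### Potential function -/

def wfun (c : ℕ) : ℕ → ℕ
  | 0 => c + 1
  | 1 => 2 * c + 3
  | (m+2) => 2 * wfun c (m+1) + wfun c m + 1

lemma wfun_zero (c : ℕ) : wfun c 0 = c + 1 := rfl
lemma wfun_one (c : ℕ) : wfun c 1 = 2 * c + 3 := rfl
lemma wfun_two (c m : ℕ) : wfun c (m+2) = 2 * wfun c (m+1) + wfun c m + 1 := rfl

lemma wfun_ge (c m : ℕ) : m + c + 1 ≤ wfun c m := by
  induction m using Nat.strong_induction_on with
  | _ m ih =>
    match m with
    | 0 => simp [wfun]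
    | 1 => simp [wfun]; omega
    | (m+2) =>
      have h1 := ih (m+1) (by omega)
      have h0 := ih m (by omega)
      rw [wfun_two]; omega

lemma wfun_mono (c : ℕ) : Monotone (wfun c) := by
  apply monotone_nat_of_le_succ
  intro m
  match m with
  | 0 => simp [wfun]; omega
  | (m+1) => rw [wfun_two]; omega

lemma wfun_key (c m : ℕ) :
    2 * (∑ j ∈ Finset.range (m+1), wfun c j) + (m + c + 2) ≤ wfun c (m+1) + wfun c m := by
  induction m with
  | zero => simp [wfun]; omega
  | succ m ih =>
    rw [Finset.sum_range_succ, wfun_two]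
    omega

lemma wfun_step_le (c m : ℕ) (hc : 1 ≤ c) : 3 * wfun c (m+1) ≤ 8 * wfun c m := by
  match m with
  | 0 => simp [wfun]; omega
  | (m+1) =>
    have h2 : 3 * wfun c m + 3 ≤ 2 * wfun c (m+1) := by
      match m with
      | 0 => simp [wfun]; omega
      | (m+1) =>
        rw [wfun_two]
        have := wfun_ge c m
        have := wfun_ge c (m+1)
        omega
    rw [wfun_two]; omega

lemma wfun_pow_le (c : ℕ) (hc : 1 ≤ c) (m : ℕ) : 3^m * wfun c m ≤ (c+1) * 8^m := by
  induction m with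
  | zero => simp [wfun]
  | succ m ih =>
    have h := wfun_step_le c m hc
    calc 3^(m+1) * wfun c (m+1) = 3^m * (3 * wfun c (m+1)) := by ring
    _ ≤ 3^m * (8 * wfun c m) := Nat.mul_le_mul_left _ h
    _ = 8 * (3^m * wfun c m) := by ring
    _ ≤ 8 * ((c+1) * 8^m) := Nat.mul_le_mul_left _ ih
    _ = (c+1) * 8^(m+1) := by ring

lemma geom_sum3 (m : ℕ) : 2 * (∑ j ∈ Finset.range m, 3^j) + 1 = 3^m := by
  induction m with
  | zero => simp
  | succ m ih => rw [Finset.sum_range_succ, pow_succ]; omega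

lemma exists_max_fst {β : Type} : ∀ (l : List (ℕ × β)), l ≠ [] → ∃ p ∈ l, ∀ q ∈ l, q.1 ≤ p.1 := by
  intro l
  induction l with
  | nil => simp
  | cons a l ih =>
    intro _
    rcases eq_or_ne l [] with rfl | hl
    · exact ⟨a, by simp, by simp⟩
    · obtain ⟨p, hp, hmax⟩ := ih hl
      rcases le_total p.1 a.1 with h | h
      · refine ⟨a, by simp, ?_⟩
        intro q hq
        rcases List.mem_cons.1 hq with rfl | hq
        · exact le_rfl
        · exact (hmax q hq).trans h
      · refine ⟨p, List.mem_cons_of_mem _ hp, ?_⟩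
        intro q hq
        rcases List.mem_cons.1 hq with rfl | hq
        · exact h
        · exact hmax q hq


namespace Pos

/-- Reachability in a position. -/
def rch (T : Pos ℕ) : ℕ → ℕ → Prop := Relation.ReflTransGen (fun a b => (a, b) ∈ T.A)

lemma mem_Succ {T : Pos ℕ} {x z : ℕ} : z ∈ T.Succ x ↔ z ∈ T.V ∧ rch T x z := by
  simp [Pos.Succ, rch]

lemma mem_Pred {T : Pos ℕ} {y z : ℕ} : z ∈ T.Pred y ↔ z ∈ T.V ∧ rch T z y := by
  simp [Pos.Pred, rch]

lemma mem_R {G : Pos ℕ} {z : ℕ} : z ∈ G.R ↔ z ∈ G.V ∧ z ∉ G.left := Finset.mem_sdiff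

lemma mem_ForcL {G : Pos ℕ} {z : ℕ} : z ∈ G.ForcL ↔ z ∈ G.left ∧ G.Succ z ⊆ G.left := by
  simp [Pos.ForcL]

lemma mem_ForcR {G : Pos ℕ} {z : ℕ} : z ∈ G.ForcR ↔ z ∈ G.R ∧ G.Pred z ⊆ G.R := by
  simp [Pos.ForcR]

lemma mem_Forc {G : Pos ℕ} {z : ℕ} :
    z ∈ G.Forc ↔ (z ∈ G.left ∧ G.Succ z ⊆ G.left) ∨ (z ∈ G.R ∧ G.Pred z ⊆ G.R) := by
  simp [Pos.Forc, Finset.mem_union, mem_ForcL, mem_ForcR]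

lemma erase_V {G : Pos ℕ} {S : Finset ℕ} : (G.erase S).V = G.V \ S := rfl

lemma erase_left {G : Pos ℕ} {S : Finset ℕ} : (G.erase S).left = G.left \ S := rfl

lemma mem_erase_A {G : Pos ℕ} {S : Finset ℕ} {a b : ℕ} :
    (a, b) ∈ (G.erase S).A ↔ (a, b) ∈ G.A ∧ (a ∈ G.V ∧ a ∉ S) ∧ (b ∈ G.V ∧ b ∉ S) := by
  simp [Pos.erase, Finset.mem_filter, Finset.mem_sdiff]

end Pos

open Pos

open Classical in
/-- The children of a vertex. -/
noncomputable def chld (T : Pos ℕ) (v : ℕ) : Finset ℕ := T.V.filter (fun w => (v, w) ∈ T.A)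

lemma mem_chld {T : Pos ℕ} {v w : ℕ} : w ∈ chld T v ↔ w ∈ T.V ∧ (v, w) ∈ T.A := by
  simp [chld]

/-- Destructured form of `IsTnc`. -/
structure TreeData (n c : ℕ) (T : Pos ℕ) where
  wf : T.WF
  lvl : ℕ → ℕ
  lvl_le : ∀ v ∈ T.V, lvl v ≤ n + 1
  left_iff : ∀ v, v ∈ T.left ↔ v ∈ T.V ∧ lvl v ≤ n
  root_ex : ∃! r, r ∈ T.V ∧ lvl r = 0
  arc_lvl : ∀ p ∈ T.A, lvl p.2 = lvl p.1 + 1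
  parent_ex : ∀ v ∈ T.V, 0 < lvl v → ∃! u, (u, v) ∈ T.A
  child3 : ∀ v ∈ T.V, lvl v < n → (chld T v).card = 3
  childc : ∀ v ∈ T.V, lvl v = n → (chld T v).card = c

lemma isTnc_treeData {n c : ℕ} {T : Pos ℕ} (h : IsTnc n c T) : Nonempty (TreeData n c T) := by
  obtain ⟨hwf, lvl, h1, h2, h3, h4, h5, h6, h7⟩ := h
  refine ⟨⟨hwf, lvl, h1, ?_, h3, h4, h5, ?_, ?_⟩⟩
  · intro v; rw [h2]; simp
  · intro v hv hl
    have := h6 v hv hl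
    rwa [show chld T v = T.V.filter (fun w => (v, w) ∈ T.A) from by simp [chld]]
  · intro v hv hl
    have := h7 v hv hl
    rwa [show chld T v = T.V.filter (fun w => (v, w) ∈ T.A) from by simp [chld]]

lemma treeData_isTnc {n c : ℕ} {T : Pos ℕ} (h : TreeData n c T) : IsTnc n c T := by
  classical
  refine ⟨h.wf, h.lvl, h.lvl_le, ?_, h.root_ex, h.arc_lvl, h.parent_ex, ?_, ?_⟩
  · ext v; simp [h.left_iff v]
  · intro v hv hl
    have := h.child3 v hv hl
    rwa [show chld T v = T.V.filter (fun w => (v, w) ∈ T.A) from by simp [chld]] at this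
  · intro v hv hl
    have := h.childc v hv hl
    rwa [show chld T v = T.V.filter (fun w => (v, w) ∈ T.A) from by simp [chld]] at this

namespace TreeData

variable {n c : ℕ} {T : Pos ℕ}

lemma arcV (h : TreeData n c T) {a b : ℕ} (hab : (a, b) ∈ T.A) : a ∈ T.V ∧ b ∈ T.V :=
  h.wf.1 (a, b) hab

lemma arc_lvl' (h : TreeData n c T) {a b : ℕ} (hab : (a, b) ∈ T.A) :
    h.lvl b = h.lvl a + 1 := h.arc_lvl (a, b) hab

lemma rch_lvl_le (h : TreeData n c T) {a b : ℕ} (hr : rch T a b) : h.lvl a ≤ h.lvl b := by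
  induction hr with
  | refl => exact le_rfl
  | tail _ hbc ih => have := h.arc_lvl' hbc; omega

lemma rch_lvl_eq (h : TreeData n c T) {a b : ℕ} (hr : rch T a b)
    (hl : h.lvl b ≤ h.lvl a) : a = b := by
  rcases hr.cases_head with rfl | ⟨c', hac, hcb⟩
  · rfl
  · have h1 := h.arc_lvl' hac
    have h2 := h.rch_lvl_le hcb
    omega

lemma pred_self (h : TreeData n c T) {y : ℕ} (hy : y ∈ T.V) : y ∈ T.Pred y :=
  mem_Pred.2 ⟨hy, Relation.ReflTransGen.refl⟩

lemma succ_self (h : TreeData n c T) {y : ℕ} (hy : y ∈ T.V) : y ∈ T.Succ y :=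
  mem_Succ.2 ⟨hy, Relation.ReflTransGen.refl⟩

lemma pred_sub (h : TreeData n c T) {y : ℕ} : T.Pred y ⊆ T.V := fun z hz => (mem_Pred.1 hz).1

lemma succ_sub (h : TreeData n c T) {y : ℕ} : T.Succ y ⊆ T.V := fun z hz => (mem_Succ.1 hz).1

lemma lvl_R (h : TreeData n c T) {y : ℕ} (hy : y ∈ T.V) (hyl : y ∉ T.left) :
    h.lvl y = n + 1 := by
  have h1 := h.lvl_le y hy
  have h2 : ¬ h.lvl y ≤ n := fun hle => hyl ((h.left_iff y).2 ⟨hy, hle⟩)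
  omega

lemma mem_left (h : TreeData n c T) {v : ℕ} (hv : v ∈ T.V) (hl : h.lvl v ≤ n) :
    v ∈ T.left := (h.left_iff v).2 ⟨hv, hl⟩

lemma pred_zero (h : TreeData n c T) {y : ℕ} (hy : y ∈ T.V) (h0 : h.lvl y = 0) :
    T.Pred y = {y} := by
  ext z
  simp only [mem_Pred, Finset.mem_singleton]
  constructor
  · rintro ⟨hz, hr⟩
    rcases hr.cases_tail with rfl | ⟨u, _, huy⟩
    · rfl
    · have := h.arc_lvl' huy; omega
  · rintro rfl; exact ⟨hy, Relation.ReflTransGen.refl⟩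

lemma pred_rec (h : TreeData n c T) {y u : ℕ} (hy : y ∈ T.V) (h0 : 0 < h.lvl y)
    (hu : (u, y) ∈ T.A) : T.Pred y = insert y (T.Pred u) := by
  obtain ⟨u', _, huniq⟩ := h.parent_ex y hy h0
  ext z
  simp only [mem_Pred, Finset.mem_insert]
  constructor
  · rintro ⟨hz, hr⟩
    rcases hr.cases_tail with rfl | ⟨w, hzw, hwy⟩
    · exact Or.inl rfl
    · have : w = u := by rw [huniq w hwy, huniq u hu]
      subst this
      exact Or.inr ⟨hz, hzw⟩
  · rintro (rfl | ⟨hz, hr⟩)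
    · exact ⟨hy, Relation.ReflTransGen.refl⟩
    · exact ⟨hz, hr.tail hu⟩

lemma pred_lvl_le (h : TreeData n c T) {y z : ℕ} (hz : z ∈ T.Pred y) : h.lvl z ≤ h.lvl y :=
  h.rch_lvl_le (mem_Pred.1 hz).2

lemma card_pred (h : TreeData n c T) :
    ∀ k, ∀ y ∈ T.V, h.lvl y = k → (T.Pred y).card = k + 1 := by
  intro k
  induction k with
  | zero =>
    intro y hy h0
    rw [h.pred_zero hy h0]; simp
  | succ k ih =>
    intro y hy hk
    obtain ⟨u, hu, _⟩ := h.parent_ex y hy (by omega)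
    have huV := (h.arcV hu).1
    have hul : h.lvl u = k := by have := h.arc_lvl' hu; omega
    rw [h.pred_rec hy (by omega) hu]
    rw [Finset.card_insert_of_notMem, ih u huV hul]
    intro hmem
    have := h.pred_lvl_le hmem
    omega

lemma pred_unique_lvl (h : TreeData n c T) :
    ∀ k, ∀ y ∈ T.V, h.lvl y = k →
      ∀ z ∈ T.Pred y, ∀ z' ∈ T.Pred y, h.lvl z = h.lvl z' → z = z' := by
  intro k
  induction k with
  | zero =>
    intro y hy h0 z hz z' hz' _
    rw [h.pred_zero hy h0] at hz hz'
    simp at hz hz'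
    rw [hz, hz']
  | succ k ih =>
    intro y hy hk z hz z' hz' hll
    obtain ⟨u, hu, _⟩ := h.parent_ex y hy (by omega)
    have huV := (h.arcV hu).1
    have hul : h.lvl u = k := by have := h.arc_lvl' hu; omega
    rw [h.pred_rec hy (by omega) hu] at hz hz'
    rcases Finset.mem_insert.1 hz with h1 | h1 <;> rcases Finset.mem_insert.1 hz' with h2 | h2
    · rw [h1, h2]
    · exfalso; have := h.pred_lvl_le h2; rw [h1] at hll; omega
    · exfalso; have := h.pred_lvl_le h1; rw [h2] at hll; omega
    · exact ih u huV hul _ h1 _ h2 hll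

lemma pred_chain (h : TreeData n c T) :
    ∀ k, ∀ y ∈ T.V, h.lvl y = k →
      ∀ z ∈ T.Pred y, ∀ z' ∈ T.Pred y, h.lvl z ≤ h.lvl z' → z ∈ T.Pred z' := by
  intro k
  induction k with
  | zero =>
    intro y hy h0 z hz z' hz' _
    rw [h.pred_zero hy h0] at hz hz'
    simp at hz hz'
    rw [hz, hz']
    exact h.pred_self hy
  | succ k ih =>
    intro y hy hk z hz z' hz' hll
    obtain ⟨u, hu, _⟩ := h.parent_ex y hy (by omega)
    have huV := (h.arcV hu).1
    have hul : h.lvl u = k := by have := h.arc_lvl' hu; omega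
    have hins := h.pred_rec hy (by omega) hu
    rw [hins] at hz hz'
    rcases Finset.mem_insert.1 hz' with h2 | h2
    · subst h2
      rw [hins]
      exact hz
    · rcases Finset.mem_insert.1 hz with h1 | h1
      · exfalso
        have := h.pred_lvl_le h2
        rw [h1] at hll
        omega
      · exact ih u huV hul z h1 z' h2 hll

lemma pred_surj (h : TreeData n c T) :
    ∀ k, ∀ y ∈ T.V, h.lvl y = k → ∀ j ≤ k, ∃ a ∈ T.Pred y, h.lvl a = j := by
  intro k
  induction k with
  | zero =>
    intro y hy h0 j hj
    exact ⟨y, h.pred_self hy, by omega⟩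
  | succ k ih =>
    intro y hy hk j hj
    rcases Nat.eq_or_lt_of_le hj with rfl | hj'
    · exact ⟨y, h.pred_self hy, hk⟩
    · obtain ⟨u, hu, _⟩ := h.parent_ex y hy (by omega)
      have huV := (h.arcV hu).1
      have hul : h.lvl u = k := by have := h.arc_lvl' hu; omega
      obtain ⟨a, ha, hal⟩ := ih u huV hul j (by omega)
      refine ⟨a, ?_, hal⟩
      rw [h.pred_rec hy (by omega) hu]
      exact Finset.mem_insert_of_mem ha

lemma succ_leaf (h : TreeData n c T) {y : ℕ} (hy : y ∈ T.V) (hl : h.lvl y = n + 1) :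
    T.Succ y = {y} := by
  ext z
  simp only [mem_Succ, Finset.mem_singleton]
  constructor
  · rintro ⟨hz, hr⟩
    rcases hr.cases_head with rfl | ⟨c', hyc, hcz⟩
    · rfl
    · have h1 := h.arc_lvl' hyc
      have h2 := h.lvl_le c' (h.arcV hyc).2
      omega
  · rintro rfl; exact ⟨hy, Relation.ReflTransGen.refl⟩

lemma succ_root (h : TreeData n c T) {r : ℕ} (hr : r ∈ T.V) (h0 : h.lvl r = 0) :
    ∀ k, ∀ z ∈ T.V, h.lvl z = k → z ∈ T.Succ r := by
  intro k
  induction k with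
  | zero =>
    intro z hz hzl
    obtain ⟨r', hr', huniq⟩ := h.root_ex
    have e1 : z = r' := huniq z ⟨hz, hzl⟩
    have e2 : r = r' := huniq r ⟨hr, h0⟩
    rw [e1, ← e2]
    exact h.succ_self hr
  | succ k ih =>
    intro z hz hzl
    obtain ⟨u, hu, _⟩ := h.parent_ex z hz (by omega)
    have huV := (h.arcV hu).1
    have hul : h.lvl u = k := by have := h.arc_lvl' hu; omega
    have := ih u huV hul
    rw [mem_Succ] at this ⊢
    exact ⟨hz, this.2.tail hu⟩

lemma succ_root_eq (h : TreeData n c T) {r : ℕ} (hr : r ∈ T.V) (h0 : h.lvl r = 0) :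
    T.Succ r = T.V :=
  Finset.Subset.antisymm (h.succ_sub) (fun z hz => h.succ_root hr h0 (h.lvl z) z hz rfl)

lemma chld_nonempty (h : TreeData n c T) (hc : 1 ≤ c) {v : ℕ} (hv : v ∈ T.V)
    (hl : h.lvl v ≤ n) : (chld T v).Nonempty := by
  rw [← Finset.card_pos]
  rcases Nat.lt_or_ge (h.lvl v) n with hlt | hge
  · rw [h.child3 v hv hlt]; omega
  · rw [h.childc v hv (by omega)]; omega

lemma descend (h : TreeData n c T) (hc : 1 ≤ c) :
    ∀ j, ∀ v ∈ T.V, n + 1 - h.lvl v ≤ j → ∃ z ∈ T.Succ v, h.lvl z = n + 1 := by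
  intro j
  induction j with
  | zero =>
    intro v hv hj
    have := h.lvl_le v hv
    exact ⟨v, h.succ_self hv, by omega⟩
  | succ j ih =>
    intro v hv hj
    rcases Nat.lt_or_ge (h.lvl v) (n + 1) with hlt | hge
    · obtain ⟨w, hw⟩ := h.chld_nonempty hc hv (by omega)
      rw [mem_chld] at hw
      have hwl : h.lvl w = h.lvl v + 1 := h.arc_lvl' hw.2
      obtain ⟨z, hz, hzl⟩ := ih w hw.1 (by omega)
      rw [mem_Succ] at hz
      exact ⟨z, mem_Succ.2 ⟨hz.1,
        Relation.ReflTransGen.trans (Relation.ReflTransGen.single hw.2) hz.2⟩, hzl⟩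
    · have := h.lvl_le v hv
      exact ⟨v, h.succ_self hv, by omega⟩

lemma relevant (h : TreeData n c T) (hc : 1 ≤ c) : T.Forc = ∅ := by
  rw [Finset.eq_empty_iff_forall_notMem]
  intro z hz
  rcases mem_Forc.1 hz with ⟨hzl, hsub⟩ | ⟨hzr, hsub⟩
  · have hzV : z ∈ T.V := ((h.left_iff z).1 hzl).1
    obtain ⟨w, hw, hwl⟩ := h.descend hc (n + 1 - h.lvl z) z hzV le_rfl
    have := (h.left_iff w).1 (hsub hw)
    omega
  · rw [mem_R] at hzr
    have hzl : h.lvl z = n + 1 := h.lvl_R hzr.1 hzr.2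
    obtain ⟨u, hu, _⟩ := h.parent_ex z hzr.1 (by omega)
    have huV := (h.arcV hu).1
    have hul : h.lvl u = n := by have := h.arc_lvl' hu; omega
    have huP : u ∈ T.Pred z := mem_Pred.2 ⟨huV, Relation.ReflTransGen.single hu⟩
    have := mem_R.1 (hsub huP)
    exact this.2 (h.mem_left huV (by omega))

lemma two_le_card (h : TreeData n c T) (hc : 1 ≤ c) : 2 ≤ T.V.card := by
  obtain ⟨r, ⟨hrV, hr0⟩, _⟩ := h.root_ex
  obtain ⟨z, hz, hzl⟩ := h.descend hc (n + 1) r hrV (by omega)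
  have hzV : z ∈ T.V := (mem_Succ.1 hz).1
  have hne : r ≠ z := by intro e; rw [e] at hr0; omega
  calc 2 = ({r, z} : Finset ℕ).card := by rw [Finset.card_insert_of_notMem (by simp [hne]), Finset.card_singleton]
  _ ≤ T.V.card := Finset.card_le_card (by intro w hw; rcases Finset.mem_insert.1 hw with rfl | hw; exact hrV; rw [Finset.mem_singleton] at hw; subst hw; exact hzV)

end TreeData


lemma succ_subset {G : Pos ℕ} {x : ℕ} : G.Succ x ⊆ G.V := fun z hz => (mem_Succ.1 hz).1

lemma pred_subset {G : Pos ℕ} {y : ℕ} : G.Pred y ⊆ G.V := fun z hz => (mem_Pred.1 hz).1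

lemma rch_mono {G H : Pos ℕ} (hsub : ∀ a b, (a, b) ∈ G.A → (a, b) ∈ H.A) {x z : ℕ}
    (h : rch G x z) : rch H x z :=
  Relation.ReflTransGen.mono (fun a b hab => hsub a b hab) _ _ h

open Classical in
/-- The induced subgraph on the successors of `u`. -/
noncomputable def piece (T : Pos ℕ) (u : ℕ) : Pos ℕ :=
  ⟨T.Succ u, T.A.filter (fun p => p.1 ∈ T.Succ u ∧ p.2 ∈ T.Succ u),
   T.left.filter (fun z => z ∈ T.Succ u)⟩

lemma piece_V {T : Pos ℕ} {u : ℕ} : (piece T u).V = T.Succ u := rfl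

lemma mem_piece_A {T : Pos ℕ} {u a b : ℕ} :
    (a, b) ∈ (piece T u).A ↔ (a, b) ∈ T.A ∧ a ∈ T.Succ u ∧ b ∈ T.Succ u := by
  simp [piece]

lemma mem_piece_left {T : Pos ℕ} {u z : ℕ} :
    z ∈ (piece T u).left ↔ z ∈ T.left ∧ z ∈ T.Succ u := by
  simp [piece]

lemma piece_wf (T : Pos ℕ) (u : ℕ) : (piece T u).WF := by
  constructor
  · rintro ⟨a, b⟩ hp
    exact ⟨(mem_piece_A.1 hp).2.1, (mem_piece_A.1 hp).2.2⟩
  · intro z hz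
    exact (mem_piece_left.1 hz).2

namespace TreeData

variable {n c : ℕ} {T : Pos ℕ}

lemma succ_trans_arc (h : TreeData n c T) {u z w : ℕ} (hz : z ∈ T.Succ u)
    (hw : (z, w) ∈ T.A) : w ∈ T.Succ u :=
  mem_Succ.2 ⟨(h.arcV hw).2, (mem_Succ.1 hz).2.tail hw⟩

lemma succ_trans (h : TreeData n c T) {u v z : ℕ} (hv : v ∈ T.Succ u)
    (hz : z ∈ T.Succ v) : z ∈ T.Succ u :=
  mem_Succ.2 ⟨(mem_Succ.1 hz).1,
    Relation.ReflTransGen.trans (mem_Succ.1 hv).2 (mem_Succ.1 hz).2⟩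

lemma succ_lvl_le (h : TreeData n c T) {u z : ℕ} (hz : z ∈ T.Succ u) :
    h.lvl u ≤ h.lvl z := h.rch_lvl_le (mem_Succ.1 hz).2

/-- The subtree rooted at a vertex of level at most `n` is a full tree. -/
noncomputable def piece_data (h : TreeData n c T) {u : ℕ} (hu : u ∈ T.V) (hl : h.lvl u ≤ n) :
    TreeData (n - h.lvl u) c (piece T u) := by
  refine ⟨piece_wf T u, fun v => h.lvl v - h.lvl u, ?_, ?_, ?_, ?_, ?_, ?_, ?_⟩
  · intro v hv
    have h1 := h.lvl_le v (succ_subset hv)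
    omega
  · intro v
    rw [show (piece T u).left = T.left.filter (fun z => z ∈ T.Succ u) from rfl]
    rw [Finset.mem_filter]
    constructor
    · rintro ⟨hvl, hvs⟩
      have h1 := (h.left_iff v).1 hvl
      have h2 := h.succ_lvl_le hvs
      exact ⟨hvs, by omega⟩
    · rintro ⟨hvs, hle⟩
      have h2 := h.succ_lvl_le hvs
      exact ⟨(h.left_iff v).2 ⟨succ_subset hvs, by omega⟩, hvs⟩
  · refine ⟨u, ⟨h.succ_self hu, by simp⟩, ?_⟩
    rintro v ⟨hv, hv0⟩
    have h2 := h.succ_lvl_le hv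
    exact (h.rch_lvl_eq (mem_Succ.1 hv).2 (by omega)).symm
  · rintro ⟨a, b⟩ hp
    obtain ⟨hab, ha, _⟩ := mem_piece_A.1 hp
    have h1 := h.arc_lvl' hab
    have h2 := h.succ_lvl_le ha
    dsimp only
    omega
  · intro v hv hpos
    have hvS : v ∈ T.Succ u := hv
    have h2 := h.succ_lvl_le hvS
    have hvV := succ_subset hvS
    have hgt : h.lvl u < h.lvl v := by omega
    obtain ⟨w, huw, hwv⟩ : ∃ w, rch T u w ∧ (w, v) ∈ T.A := by
      rcases (mem_Succ.1 hvS).2.cases_tail with e | hw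
      · exfalso; rw [e] at hgt; omega
      · exact hw
    have hwS : w ∈ T.Succ u := mem_Succ.2 ⟨(h.arcV hwv).1, huw⟩
    obtain ⟨pp, hpp, huniq⟩ := h.parent_ex v hvV (by omega)
    refine ⟨w, mem_piece_A.2 ⟨hwv, hwS, hvS⟩, ?_⟩
    intro w' hw'
    have h3 := (mem_piece_A.1 hw').1
    rw [huniq w' h3, huniq w hwv]
  · intro v hv hlt
    have hvS : v ∈ T.Succ u := hv
    have h2 := h.succ_lvl_le hvS
    have heq : chld (piece T u) v = chld T v := by
      ext w
      rw [mem_chld, mem_chld, piece_V]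
      constructor
      · rintro ⟨hw, harc⟩
        exact ⟨succ_subset hw, (mem_piece_A.1 harc).1⟩
      · rintro ⟨hw, harc⟩
        have hwS := h.succ_trans_arc hvS harc
        exact ⟨hwS, mem_piece_A.2 ⟨harc, hvS, hwS⟩⟩
    rw [heq]
    exact h.child3 v (succ_subset hvS) (by omega)
  · intro v hv hlt
    have hvS : v ∈ T.Succ u := hv
    have h2 := h.succ_lvl_le hvS
    have heq : chld (piece T u) v = chld T v := by
      ext w
      rw [mem_chld, mem_chld, piece_V]
      constructor
      · rintro ⟨hw, harc⟩
        exact ⟨succ_subset hw, (mem_piece_A.1 harc).1⟩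
      · rintro ⟨hw, harc⟩
        have hwS := h.succ_trans_arc hvS harc
        exact ⟨hwS, mem_piece_A.2 ⟨harc, hvS, hwS⟩⟩
    rw [heq]
    exact h.childc v (succ_subset hvS) (by omega)

end TreeData

/-- A decomposition of a position into disjoint well-formed components. -/
structure Decomp (l : List (Pos ℕ)) (G : Pos ℕ) : Prop where
  wf : ∀ p ∈ l, p.WF
  disj : List.Pairwise (fun p q => Disjoint p.V q.V) l
  memV : ∀ z, z ∈ G.V ↔ ∃ p ∈ l, z ∈ p.V
  memA : ∀ a b, (a, b) ∈ G.A ↔ ∃ p ∈ l, (a, b) ∈ p.A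
  memL : ∀ z, z ∈ G.left ↔ ∃ p ∈ l, z ∈ p.left

namespace Decomp

variable {l : List (Pos ℕ)} {G : Pos ℕ}

lemma comp_eq (hD : Decomp l G) {p q : Pos ℕ} {z : ℕ} (hp : p ∈ l) (hq : q ∈ l)
    (hzp : z ∈ p.V) (hzq : z ∈ q.V) : p = q := by
  by_contra hne
  have hdisj : Disjoint p.V q.V :=
    by haveI : Std.Symm (fun p q : Pos ℕ => Disjoint p.V q.V) := ⟨fun _ _ hab => hab.symm⟩
       exact List.Pairwise.forall hD.disj hp hq hne
  exact Finset.disjoint_left.1 hdisj hzp hzq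

lemma V_local (hD : Decomp l G) {p : Pos ℕ} {z : ℕ} (hp : p ∈ l) (hz : z ∈ p.V) :
    z ∈ G.V := (hD.memV z).2 ⟨p, hp, hz⟩

lemma left_local (hD : Decomp l G) {p : Pos ℕ} {z : ℕ} (hp : p ∈ l) (hz : z ∈ p.V) :
    z ∈ G.left ↔ z ∈ p.left := by
  constructor
  · intro hzl
    obtain ⟨q, hq, hzq⟩ := (hD.memL z).1 hzl
    have hzqV : z ∈ q.V := (hD.wf q hq).2 hzq
    rwa [hD.comp_eq hp hq hz hzqV]
  · intro hzl
    exact (hD.memL z).2 ⟨p, hp, hzl⟩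

lemma arcA (hD : Decomp l G) {p : Pos ℕ} {a b : ℕ} (hab : (a, b) ∈ G.A) (hp : p ∈ l)
    (hb : b ∈ p.V) : (a, b) ∈ p.A ∧ a ∈ p.V := by
  obtain ⟨q, hq, habq⟩ := (hD.memA a b).1 hab
  have haq : a ∈ q.V := ((hD.wf q hq).1 (a, b) habq).1
  have hbq : b ∈ q.V := ((hD.wf q hq).1 (a, b) habq).2
  have := hD.comp_eq hp hq hb hbq
  subst this
  exact ⟨habq, haq⟩

lemma arcA' (hD : Decomp l G) {p : Pos ℕ} {a b : ℕ} (hab : (a, b) ∈ G.A) (hp : p ∈ l)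
    (ha : a ∈ p.V) : (a, b) ∈ p.A ∧ b ∈ p.V := by
  obtain ⟨q, hq, habq⟩ := (hD.memA a b).1 hab
  have haq : a ∈ q.V := ((hD.wf q hq).1 (a, b) habq).1
  have hbq : b ∈ q.V := ((hD.wf q hq).1 (a, b) habq).2
  have := hD.comp_eq hp hq ha haq
  subst this
  exact ⟨habq, hbq⟩

lemma rch_to (hD : Decomp l G) {p : Pos ℕ} {y : ℕ} (hp : p ∈ l) (hy : y ∈ p.V) :
    ∀ z, rch G z y → z ∈ p.V ∧ rch p z y := by
  intro z hz
  induction hz using Relation.ReflTransGen.head_induction_on with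
  | refl => exact ⟨hy, Relation.ReflTransGen.refl⟩
  | head hab _ ih =>
    obtain ⟨hzV, hr⟩ := ih
    obtain ⟨harc, haV⟩ := hD.arcA hab hp hzV
    exact ⟨haV, Relation.ReflTransGen.head harc hr⟩

lemma rch_from (hD : Decomp l G) {p : Pos ℕ} {x : ℕ} (hp : p ∈ l) (hx : x ∈ p.V) :
    ∀ z, rch G x z → z ∈ p.V ∧ rch p x z := by
  intro z hz
  induction hz with
  | refl => exact ⟨hx, Relation.ReflTransGen.refl⟩
  | tail _ hbc ih =>
    obtain ⟨hbV, hr⟩ := ih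
    obtain ⟨harc, hcV⟩ := hD.arcA' hbc hp hbV
    exact ⟨hcV, hr.tail harc⟩

lemma pred_local (hD : Decomp l G) {p : Pos ℕ} {y : ℕ} (hp : p ∈ l) (hy : y ∈ p.V) :
    G.Pred y = p.Pred y := by
  ext z
  rw [mem_Pred, mem_Pred]
  constructor
  · rintro ⟨_, hr⟩
    exact hD.rch_to hp hy z hr
  · rintro ⟨hz, hr⟩
    refine ⟨hD.V_local hp hz, ?_⟩
    exact rch_mono (fun a b hab => (hD.memA a b).2 ⟨p, hp, hab⟩) hr

lemma succ_local (hD : Decomp l G) {p : Pos ℕ} {x : ℕ} (hp : p ∈ l) (hx : x ∈ p.V) :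
    G.Succ x = p.Succ x := by
  ext z
  rw [mem_Succ, mem_Succ]
  constructor
  · rintro ⟨_, hr⟩
    exact hD.rch_from hp hx z hr
  · rintro ⟨hz, hr⟩
    refine ⟨hD.V_local hp hz, ?_⟩
    exact rch_mono (fun a b hab => (hD.memA a b).2 ⟨p, hp, hab⟩) hr

lemma R_local (hD : Decomp l G) {p : Pos ℕ} {z : ℕ} (hp : p ∈ l) (hz : z ∈ p.V) :
    z ∈ G.R ↔ z ∈ p.R := by
  rw [mem_R, mem_R]
  constructor
  · rintro ⟨_, hzl⟩
    exact ⟨hz, fun hc => hzl ((hD.left_local hp hz).2 hc)⟩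
  · rintro ⟨_, hzl⟩
    exact ⟨hD.V_local hp hz, fun hc => hzl ((hD.left_local hp hz).1 hc)⟩

lemma forc_iff (hD : Decomp l G) (z : ℕ) : z ∈ G.Forc ↔ ∃ p ∈ l, z ∈ p.Forc := by
  rw [mem_Forc]
  constructor
  · rintro (⟨hzl, hsub⟩ | ⟨hzr, hsub⟩)
    · obtain ⟨p, hp, hzpl⟩ := (hD.memL z).1 hzl
      have hzpV : z ∈ p.V := (hD.wf p hp).2 hzpl
      refine ⟨p, hp, mem_Forc.2 (Or.inl ⟨hzpl, ?_⟩)⟩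
      intro w hw
      have hwG : w ∈ G.Succ z := by rw [hD.succ_local hp hzpV]; exact hw
      have hwpV : w ∈ p.V := (mem_Succ.1 hw).1
      exact (hD.left_local hp hwpV).1 (hsub hwG)
    · rw [mem_R] at hzr
      obtain ⟨p, hp, hzpV⟩ := (hD.memV z).1 hzr.1
      refine ⟨p, hp, mem_Forc.2 (Or.inr ⟨(hD.R_local hp hzpV).1 (mem_R.2 hzr), ?_⟩)⟩
      intro w hw
      have hwG : w ∈ G.Pred z := by rw [hD.pred_local hp hzpV]; exact hw
      have hwpV : w ∈ p.V := (mem_Pred.1 hw).1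
      exact (hD.R_local hp hwpV).1 (hsub hwG)
  · rintro ⟨p, hp, hf⟩
    rcases mem_Forc.1 hf with ⟨hzl, hsub⟩ | ⟨hzr, hsub⟩
    · have hzpV : z ∈ p.V := (hD.wf p hp).2 hzl
      refine Or.inl ⟨(hD.left_local hp hzpV).2 hzl, ?_⟩
      intro w hw
      rw [hD.succ_local hp hzpV] at hw
      exact (hD.left_local hp ((mem_Succ.1 hw).1)).2 (hsub hw)
    · have hzpV : z ∈ p.V := (mem_R.1 hzr).1
      refine Or.inr ⟨(hD.R_local hp hzpV).2 hzr, ?_⟩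
      intro w hw
      rw [hD.pred_local hp hzpV] at hw
      exact (hD.R_local hp ((mem_Pred.1 hw).1)).2 (hsub hw)

lemma forc_empty (hD : Decomp l G) (hall : ∀ p ∈ l, p.Forc = ∅) : G.Forc = ∅ := by
  rw [Finset.eq_empty_iff_forall_notMem]
  intro z hz
  obtain ⟨p, hp, hzp⟩ := (hD.forc_iff z).1 hz
  rw [hall p hp] at hzp
  exact absurd hzp (Finset.notMem_empty z)

end Decomp
open Classical in
/-- Vertices just below the removed set `Q`: roots of the remaining subtrees. -/
noncomputable def offQ (T : Pos ℕ) (Q : Finset ℕ) : Finset ℕ :=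
  T.V.filter (fun u => u ∉ Q ∧ ∃ p ∈ Q, (p, u) ∈ T.A)

lemma mem_offQ {T : Pos ℕ} {Q : Finset ℕ} {u : ℕ} :
    u ∈ offQ T Q ↔ u ∈ T.V ∧ u ∉ Q ∧ ∃ p ∈ Q, (p, u) ∈ T.A := by
  simp [offQ]

lemma rch_closed {T : Pos ℕ} {Q : Finset ℕ}
    (hQcl : ∀ a b, (a, b) ∈ T.A → b ∈ Q → a ∈ Q) {z q : ℕ}
    (hr : rch T z q) (hq : q ∈ Q) : z ∈ Q := by
  induction hr using Relation.ReflTransGen.head_induction_on with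
  | refl => exact hq
  | head h' _ ih => exact hQcl _ _ h' ih

lemma succ_off_disj {T : Pos ℕ} {Q : Finset ℕ}
    (hQcl : ∀ a b, (a, b) ∈ T.A → b ∈ Q → a ∈ Q) {u : ℕ} (hu : u ∈ offQ T Q) :
    ∀ z ∈ T.Succ u, z ∉ Q := by
  intro z hz hzQ
  exact (mem_offQ.1 hu).2.1 (rch_closed hQcl (mem_Succ.1 hz).2 hzQ)

namespace TreeData

variable {n c : ℕ} {T : Pos ℕ} {Q : Finset ℕ}

lemma off_partition (h : TreeData n c T)
    (hQroot : ∀ z ∈ T.V, h.lvl z = 0 → z ∈ Q) :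
    ∀ k, ∀ z ∈ T.V, z ∉ Q → h.lvl z = k → ∃ u ∈ offQ T Q, z ∈ T.Succ u := by
  intro k
  induction k with
  | zero =>
    intro z hz hzQ hzl
    exact absurd (hQroot z hz hzl) hzQ
  | succ k ih =>
    intro z hz hzQ hzl
    obtain ⟨w, hw, _⟩ := h.parent_ex z hz (by omega)
    have hwV := (h.arcV hw).1
    have hwl : h.lvl w = k := by have := h.arc_lvl' hw; omega
    by_cases hwQ : w ∈ Q
    · exact ⟨z, mem_offQ.2 ⟨hz, hzQ, w, hwQ, hw⟩, h.succ_self hz⟩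
    · obtain ⟨u, hu, hwu⟩ := ih w hwV hwQ hwl
      exact ⟨u, hu, h.succ_trans_arc hwu hw⟩

lemma off_disjoint_aux (h : TreeData n c T)
    (hQcl : ∀ a b, (a, b) ∈ T.A → b ∈ Q → a ∈ Q) {u u' z : ℕ}
    (hu : u ∈ offQ T Q) (hu' : u' ∈ offQ T Q)
    (hz : z ∈ T.Succ u) (hz' : z ∈ T.Succ u') (hle : h.lvl u ≤ h.lvl u') : u = u' := by
  have huV := (mem_offQ.1 hu).1
  have hu'V := (mem_offQ.1 hu').1
  have hzV := succ_subset hz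
  have huP : u ∈ T.Pred z := mem_Pred.2 ⟨huV, (mem_Succ.1 hz).2⟩
  have hu'P : u' ∈ T.Pred z := mem_Pred.2 ⟨hu'V, (mem_Succ.1 hz').2⟩
  rcases Nat.eq_or_lt_of_le hle with heq | hlt
  · exact h.pred_unique_lvl (h.lvl z) z hzV rfl u huP u' hu'P heq
  · exfalso
    have hchain : u ∈ T.Pred u' := h.pred_chain (h.lvl z) z hzV rfl u huP u' hu'P hle
    obtain ⟨_, hu'nQ, p, hpQ, harc⟩ := mem_offQ.1 hu'
    have hu'pos : 0 < h.lvl u' := by have := h.arc_lvl' harc; omega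
    obtain ⟨pp, hpp, huniq⟩ := h.parent_ex u' hu'V hu'pos
    rcases (mem_Pred.1 hchain).2.cases_tail with e | ⟨w, hrw, hwu'⟩
    · rw [e] at hlt; omega
    · have hwp : w = p := by rw [huniq w hwu', huniq p harc]
      subst hwp
      exact (mem_offQ.1 hu).2.1 (rch_closed hQcl hrw hpQ)

lemma off_disjoint (h : TreeData n c T)
    (hQcl : ∀ a b, (a, b) ∈ T.A → b ∈ Q → a ∈ Q) {u u' z : ℕ}
    (hu : u ∈ offQ T Q) (hu' : u' ∈ offQ T Q)
    (hz : z ∈ T.Succ u) (hz' : z ∈ T.Succ u') : u = u' := by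
  rcases le_total (h.lvl u) (h.lvl u') with hle | hle
  · exact h.off_disjoint_aux hQcl hu hu' hz hz' hle
  · exact (h.off_disjoint_aux hQcl hu' hu hz' hz hle).symm

lemma off_lvl (h : TreeData n c T) {u : ℕ} (hu : u ∈ offQ T Q) :
    1 ≤ h.lvl u ∧ h.lvl u ≤ n + 1 := by
  obtain ⟨huV, _, p, _, harc⟩ := mem_offQ.1 hu
  have := h.arc_lvl' harc
  have := h.lvl_le u huV
  omega

/-- Splitting a decomposition: erasing a predecessor-closed set `Q` from the
component `T` decomposes the rest of `T` into the subtrees hanging below `Q`. -/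
lemma split {l₁ l₂ : List (Pos ℕ)} {G : Pos ℕ}
    (hD : Decomp (l₁ ++ T :: l₂) G) (h : TreeData n c T)
    (hQsub : Q ⊆ T.V) (hQcl : ∀ a b, (a, b) ∈ T.A → b ∈ Q → a ∈ Q)
    (hQroot : ∀ z ∈ T.V, h.lvl z = 0 → z ∈ Q) :
    Decomp (l₁ ++ l₂ ++ (offQ T Q).toList.map (piece T)) (G.erase Q) := by
  have hTmem : T ∈ l₁ ++ T :: l₂ := by simp
  have hpw := List.pairwise_append.1 hD.disj
  have pwT := List.pairwise_cons.1 hpw.2.1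
  have hother : ∀ p ∈ l₁ ++ l₂, Disjoint p.V T.V := by
    intro p hp
    rcases List.mem_append.1 hp with hp | hp
    · exact hpw.2.2 p hp T List.mem_cons_self
    · exact (pwT.1 p hp).symm
  have hothers_pw : List.Pairwise (fun p q : Pos ℕ => Disjoint p.V q.V) (l₁ ++ l₂) :=
    List.pairwise_append.2 ⟨hpw.1, pwT.2,
      fun a ha b hb => hpw.2.2 a ha b (List.mem_cons_of_mem _ hb)⟩
  have hmem_other : ∀ p, p ∈ l₁ ++ l₂ → p ∈ l₁ ++ T :: l₂ := by
    intro p hp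
    rcases List.mem_append.1 hp with hp | hp
    · exact List.mem_append_left _ hp
    · exact List.mem_append_right _ (List.mem_cons_of_mem _ hp)
  have hpiece_mem : ∀ u ∈ offQ T Q,
      piece T u ∈ l₁ ++ l₂ ++ (offQ T Q).toList.map (piece T) := by
    intro u hu
    exact List.mem_append_right _ (List.mem_map.2 ⟨u, (Finset.mem_toList).2 hu, rfl⟩)
  have hnew_cases : ∀ p ∈ l₁ ++ l₂ ++ (offQ T Q).toList.map (piece T),
      p ∈ l₁ ++ l₂ ∨ ∃ u ∈ offQ T Q, p = piece T u := by
    intro p hp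
    rcases List.mem_append.1 hp with hp | hp
    · exact Or.inl hp
    · obtain ⟨u, hu, rfl⟩ := List.mem_map.1 hp
      exact Or.inr ⟨u, (Finset.mem_toList).1 hu, rfl⟩
  constructor
  · -- wf
    intro p hp
    rcases hnew_cases p hp with hp' | ⟨u, _, rfl⟩
    · exact hD.wf p (hmem_other p hp')
    · exact piece_wf T u
  · -- pairwise disjoint
    refine List.pairwise_append.2 ⟨hothers_pw, ?_, ?_⟩
    · rw [List.pairwise_map]
      refine List.Pairwise.imp_of_mem ?_ ((offQ T Q).nodup_toList)
      intro a b ha hb hne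
      rw [Finset.disjoint_left]
      intro z hza hzb
      exact hne (h.off_disjoint hQcl ((Finset.mem_toList).1 ha) ((Finset.mem_toList).1 hb) hza hzb)
    · intro a ha b hb
      obtain ⟨u, hu, rfl⟩ := List.mem_map.1 hb
      exact (hother a ha).mono_right (succ_subset)
  · -- V
    intro z
    rw [show (G.erase Q).V = G.V \ Q from rfl, Finset.mem_sdiff]
    constructor
    · rintro ⟨hzG, hzQ⟩
      obtain ⟨p, hp, hzp⟩ := (hD.memV z).1 hzG
      rcases List.mem_append.1 hp with hp | hp
      · exact ⟨p, List.mem_append_left _ (List.mem_append_left _ hp), hzp⟩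
      · rcases List.mem_cons.1 hp with hpT | hp
        · rw [hpT] at hzp
          obtain ⟨u, hu, hzu⟩ := h.off_partition hQroot (h.lvl z) z hzp hzQ rfl
          exact ⟨piece T u, hpiece_mem u hu, hzu⟩
        · exact ⟨p, List.mem_append_left _ (List.mem_append_right _ hp), hzp⟩
    · rintro ⟨p, hp, hzp⟩
      rcases hnew_cases p hp with hp' | ⟨u, hu, rfl⟩
      · refine ⟨hD.V_local (hmem_other p hp') hzp, ?_⟩
        intro hzQ
        exact Finset.disjoint_left.1 (hother p hp') hzp (hQsub hzQ)
      · exact ⟨hD.V_local hTmem (succ_subset hzp), succ_off_disj hQcl hu z hzp⟩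
  · -- A
    intro a b
    rw [mem_erase_A]
    constructor
    · rintro ⟨hab, ⟨haV, haQ⟩, ⟨hbV, hbQ⟩⟩
      obtain ⟨p, hp, habp⟩ := (hD.memA a b).1 hab
      rcases List.mem_append.1 hp with hp | hp
      · exact ⟨p, List.mem_append_left _ (List.mem_append_left _ hp), habp⟩
      · rcases List.mem_cons.1 hp with hpT | hp
        · rw [hpT] at habp
          have haT := (h.arcV habp).1
          obtain ⟨u, hu, hau⟩ := h.off_partition hQroot (h.lvl a) a haT haQ rfl
          have hbu := h.succ_trans_arc hau habp
          exact ⟨piece T u, hpiece_mem u hu, mem_piece_A.2 ⟨habp, hau, hbu⟩⟩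
        · exact ⟨p, List.mem_append_left _ (List.mem_append_right _ hp), habp⟩
    · rintro ⟨p, hp, habp⟩
      rcases hnew_cases p hp with hp' | ⟨u, hu, rfl⟩
      · have habG : (a, b) ∈ G.A := (hD.memA a b).2 ⟨p, hmem_other p hp', habp⟩
        have haV := ((hD.wf p (hmem_other p hp')).1 (a, b) habp).1
        have hbV := ((hD.wf p (hmem_other p hp')).1 (a, b) habp).2
        refine ⟨habG, ⟨hD.V_local (hmem_other p hp') haV, ?_⟩,
          ⟨hD.V_local (hmem_other p hp') hbV, ?_⟩⟩
        · intro hQ; exact Finset.disjoint_left.1 (hother p hp') haV (hQsub hQ)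
        · intro hQ; exact Finset.disjoint_left.1 (hother p hp') hbV (hQsub hQ)
      · obtain ⟨habT, hau, hbu⟩ := mem_piece_A.1 habp
        refine ⟨(hD.memA a b).2 ⟨T, hTmem, habT⟩,
          ⟨hD.V_local hTmem (succ_subset hau), succ_off_disj hQcl hu a hau⟩,
          ⟨hD.V_local hTmem (succ_subset hbu), succ_off_disj hQcl hu b hbu⟩⟩
  · -- left
    intro z
    rw [show (G.erase Q).left = G.left \ Q from rfl, Finset.mem_sdiff]
    constructor
    · rintro ⟨hzG, hzQ⟩
      obtain ⟨p, hp, hzp⟩ := (hD.memL z).1 hzG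
      rcases List.mem_append.1 hp with hp | hp
      · exact ⟨p, List.mem_append_left _ (List.mem_append_left _ hp), hzp⟩
      · rcases List.mem_cons.1 hp with hpT | hp
        · rw [hpT] at hzp
          have hzV : z ∈ T.V := (hD.wf T hTmem).2 hzp
          obtain ⟨u, hu, hzu⟩ := h.off_partition hQroot (h.lvl z) z hzV hzQ rfl
          exact ⟨piece T u, hpiece_mem u hu, mem_piece_left.2 ⟨hzp, hzu⟩⟩
        · exact ⟨p, List.mem_append_left _ (List.mem_append_right _ hp), hzp⟩
    · rintro ⟨p, hp, hzp⟩
      rcases hnew_cases p hp with hp' | ⟨u, hu, rfl⟩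
      · have hzpV : z ∈ p.V := (hD.wf p (hmem_other p hp')).2 hzp
        refine ⟨(hD.memL z).2 ⟨p, hmem_other p hp', hzp⟩, ?_⟩
        intro hQ; exact Finset.disjoint_left.1 (hother p hp') hzpV (hQsub hQ)
      · obtain ⟨hzl, hzu⟩ := mem_piece_left.1 hzp
        exact ⟨(hD.memL z).2 ⟨T, hTmem, hzl⟩, succ_off_disj hQcl hu z hzu⟩

end TreeData
/-- A forest of full trees, with recorded depths. -/
def Forest (c : ℕ) (l : List (ℕ × Pos ℕ)) (G : Pos ℕ) : Prop :=
  (∀ p ∈ l, IsTnc p.1 c p.2) ∧ Decomp (l.map Prod.snd) G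

/-- The total potential of a forest. -/
def Phi (c : ℕ) (l : List (ℕ × Pos ℕ)) : ℕ := (l.map (fun p => wfun c p.1)).sum

lemma Phi_append (c : ℕ) (a b : List (ℕ × Pos ℕ)) :
    Phi c (a ++ b) = Phi c a + Phi c b := by simp [Phi]

lemma Phi_cons (c : ℕ) (p : ℕ × Pos ℕ) (l : List (ℕ × Pos ℕ)) :
    Phi c (p :: l) = wfun c p.1 + Phi c l := by simp [Phi]

lemma offQ_self_empty (T : Pos ℕ) : offQ T T.V = ∅ := by
  rw [Finset.eq_empty_iff_forall_notMem]
  intro u hu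
  exact (mem_offQ.1 hu).2.1 (mem_offQ.1 hu).1

/-- Left's reply: grab the whole component `T'`. -/
lemma left_move {c : ℕ} (hc : 1 ≤ c) {l' : List (ℕ × Pos ℕ)} {H : Pos ℕ}
    (hF : Forest c l' H) {M : ℕ} {T' : Pos ℕ} (hmem : (M, T') ∈ l') :
    ∃ x ∈ H.left, ∃ lo : List (ℕ × Pos ℕ),
      H.Rmv x = T'.V ∧ Forest c lo (H.move x) ∧
      Phi c l' = Phi c lo + wfun c M ∧ T'.V ⊆ H.V ∧ 1 ≤ T'.V.card := by
  obtain ⟨s, t, hsplit⟩ := List.append_of_mem hmem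
  have hD : Decomp (s.map Prod.snd ++ T' :: t.map Prod.snd) H := by
    have := hF.2
    rw [hsplit] at this
    simpa using this
  have hT'mem : T' ∈ s.map Prod.snd ++ T' :: t.map Prod.snd := by simp
  have hT'd : TreeData M c T' := (isTnc_treeData (hF.1 (M, T') hmem)).some
  obtain ⟨r, ⟨hrV, hr0⟩, _⟩ := hT'd.root_ex
  have hrleft : r ∈ H.left := by
    rw [hD.left_local hT'mem hrV]
    exact hT'd.mem_left hrV (by omega)
  have hSucc : H.Succ r = T'.V := by
    rw [hD.succ_local hT'mem hrV, hT'd.succ_root_eq hrV hr0]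
  have hD2 : Decomp (s.map Prod.snd ++ t.map Prod.snd) (H.erase T'.V) := by
    have hsplit2 := hT'd.split hD (le_refl T'.V)
      (fun a b hab _ => (hT'd.arcV hab).1) (fun z hz _ => hz)
    rwa [offQ_self_empty, Finset.toList_empty, List.map_nil, List.append_nil] at hsplit2
  have hmem_st : ∀ p ∈ s ++ t, p ∈ l' := by
    intro p hp
    rw [hsplit]
    rcases List.mem_append.1 hp with hp | hp
    · exact List.mem_append_left _ hp
    · exact List.mem_append_right _ (List.mem_cons_of_mem _ hp)
  have hForc : (H.erase T'.V).Forc = ∅ := by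
    apply hD2.forc_empty
    intro p hp
    rcases List.mem_append.1 hp with hp | hp <;>
    · obtain ⟨q, hq, rfl⟩ := List.mem_map.1 hp
      have hq' : q ∈ s ++ t := by
        first
          | exact List.mem_append_left _ hq
          | exact List.mem_append_right _ hq
      exact TreeData.relevant (isTnc_treeData (hF.1 q (hmem_st q hq'))).some hc
  have hRmv : H.Rmv r = T'.V := by
    rw [Pos.Rmv, if_pos hrleft, hSucc, hForc, Finset.union_empty]
  refine ⟨r, hrleft, s ++ t, hRmv, ?_, ?_, ?_, ?_⟩
  · refine ⟨fun p hp => hF.1 p (hmem_st p hp), ?_⟩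
    rw [Pos.move, hRmv]
    rw [List.map_append]
    exact hD2
  · rw [hsplit, Phi_append, Phi_cons, Phi_append]
    simp; omega
  · intro z hz
    exact hD.V_local hT'mem hz
  · exact Finset.card_pos.2 ⟨r, hrV⟩
lemma piece_leaf_forc {n c : ℕ} {T : Pos ℕ} (h : TreeData n c T) {u : ℕ}
    (hu : u ∈ T.V) (hl : h.lvl u = n + 1) : (piece T u).Forc = {u} := by
  have hV : (piece T u).V = {u} := by rw [piece_V, h.succ_leaf hu hl]
  have hL : (piece T u).left = ∅ := by
    rw [Finset.eq_empty_iff_forall_notMem]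
    intro z hz
    obtain ⟨hzl, hzu⟩ := mem_piece_left.1 hz
    rw [h.succ_leaf hu hl, Finset.mem_singleton] at hzu
    subst hzu
    have := ((h.left_iff z).1 hzl).2
    omega
  have hR : (piece T u).R = {u} := by rw [Pos.R, hV, hL, Finset.sdiff_empty]
  ext z
  rw [mem_Forc, Finset.mem_singleton]
  constructor
  · rintro (⟨hzl, _⟩ | ⟨hzr, _⟩)
    · rw [hL] at hzl; exact absurd hzl (Finset.notMem_empty z)
    · rw [hR] at hzr; exact Finset.mem_singleton.1 hzr
  · rintro rfl
    refine Or.inr ⟨by rw [hR]; exact Finset.mem_singleton_self z, ?_⟩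
    intro w hw
    rw [hR]
    have hwV : w ∈ (piece T z).V := pred_subset hw
    rwa [hV] at hwV

/-- Right's move: removes a root-leaf path plus at most `c - 1` forced sibling
leaves, and splits the tree into at most two full subtrees of each smaller depth. -/
lemma right_move {c : ℕ} (hc : 1 ≤ c) {l : List (ℕ × Pos ℕ)} {G : Pos ℕ}
    (hF : Forest c l G) {y : ℕ} (hy : y ∈ G.R) :
    ∃ (lo lp : List (ℕ × Pos ℕ)) (m : ℕ),
      Forest c (lo ++ lp) (G.move y) ∧
      Phi c l = Phi c lo + wfun c m ∧
      Phi c lp ≤ 2 * ∑ j ∈ Finset.range m, wfun c j ∧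
      (G.Rmv y).card ≤ m + c + 1 ∧
      1 ≤ (G.Rmv y).card ∧
      G.Rmv y ⊆ G.V ∧
      (1 ≤ m → ∃ p ∈ lp, p.1 = m - 1) := by
  classical
  obtain ⟨hyV, hynl⟩ := mem_R.1 hy
  obtain ⟨p0, hp0, hyT0⟩ := (hF.2.memV y).1 hyV
  obtain ⟨q, hql, rfl⟩ := List.mem_map.1 hp0
  obtain ⟨m, T⟩ := q
  obtain ⟨s, t, hsplit⟩ := List.append_of_mem hql
  have hD : Decomp (s.map Prod.snd ++ T :: t.map Prod.snd) G := by
    have := hF.2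
    rw [hsplit] at this
    simpa using this
  have hTmem : T ∈ s.map Prod.snd ++ T :: t.map Prod.snd := by simp
  have h : TreeData m c T := (isTnc_treeData (hF.1 (m, T) hql)).some
  have hyT : y ∈ T.V := hyT0
  have hyTl : y ∉ T.left := fun hcon => hynl ((hD.left_local hTmem hyT).2 hcon)
  have hlvl : h.lvl y = m + 1 := h.lvl_R hyT hyTl
  have hmem_st : ∀ p ∈ s ++ t, p ∈ l := by
    intro p hp
    rw [hsplit]
    rcases List.mem_append.1 hp with hp | hp
    · exact List.mem_append_left _ hp
    · exact List.mem_append_right _ (List.mem_cons_of_mem _ hp)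
  set P := T.Pred y with hPdef
  have hPsub : P ⊆ T.V := pred_subset
  have hPcl : ∀ a b, (a, b) ∈ T.A → b ∈ P → a ∈ P := by
    intro a b hab hbP
    exact mem_Pred.2 ⟨(h.arcV hab).1, Relation.ReflTransGen.head hab (mem_Pred.1 hbP).2⟩
  have hProot : ∀ z ∈ T.V, h.lvl z = 0 → z ∈ P := by
    intro z hz hz0
    obtain ⟨a, haP, ha0⟩ := h.pred_surj (h.lvl y) y hyT rfl 0 (by omega)
    obtain ⟨r, _, huniq⟩ := h.root_ex
    rw [huniq z ⟨hz, hz0⟩, ← huniq a ⟨pred_subset haP, ha0⟩]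
    exact haP
  have hPG : G.Pred y = P := hD.pred_local hTmem hyT
  set sib := (offQ T P).filter (fun u => h.lvl u = m + 1) with hsibdef
  -- Forc of G.erase P is exactly sib
  have hD1 := h.split hD hPsub hPcl hProot
  have hothersForc : ∀ p ∈ s.map Prod.snd ++ t.map Prod.snd, Pos.Forc p = ∅ := by
    intro p hp
    rcases List.mem_append.1 hp with hp | hp <;>
    · obtain ⟨q, hq, rfl⟩ := List.mem_map.1 hp
      have hq' : q ∈ s ++ t := by
        first
          | exact List.mem_append_left _ hq
          | exact List.mem_append_right _ hq
      exact TreeData.relevant (isTnc_treeData (hF.1 q (hmem_st q hq'))).some hc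
  have hForcP : (G.erase P).Forc = sib := by
    ext z
    rw [hD1.forc_iff z]
    constructor
    · rintro ⟨p, hp, hzf⟩
      rcases List.mem_append.1 hp with hp | hp
      · rw [hothersForc p hp] at hzf
        exact absurd hzf (Finset.notMem_empty z)
      · obtain ⟨u, hu, rfl⟩ := List.mem_map.1 hp
        have huoff := Finset.mem_toList.1 hu
        have hbnd := h.off_lvl huoff
        rcases Nat.lt_or_ge (h.lvl u) (m + 1) with hlt | hge
        · rw [TreeData.relevant (h.piece_data (mem_offQ.1 huoff).1 (by omega)) hc] at hzf
          exact absurd hzf (Finset.notMem_empty z)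
        · have heq : h.lvl u = m + 1 := by omega
          rw [piece_leaf_forc h (mem_offQ.1 huoff).1 heq, Finset.mem_singleton] at hzf
          subst hzf
          exact Finset.mem_filter.2 ⟨huoff, heq⟩
    · intro hzs
      obtain ⟨hzoff, hzlvl⟩ := Finset.mem_filter.1 hzs
      refine ⟨piece T z, ?_, ?_⟩
      · exact List.mem_append_right _ (List.mem_map.2 ⟨z, Finset.mem_toList.2 hzoff, rfl⟩)
      · rw [piece_leaf_forc h (mem_offQ.1 hzoff).1 hzlvl]
        exact Finset.mem_singleton_self z
  have hRmvEq : G.Rmv y = P ∪ sib := by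
    rw [Pos.Rmv, if_neg hynl, hPG, hForcP]
  -- cardinalities
  have hcardP : P.card = m + 2 := h.card_pred (m + 1) y hyT hlvl
  obtain ⟨py, hpyA, hpyuniq⟩ := h.parent_ex y hyT (by omega)
  have hpyV := (h.arcV hpyA).1
  have hpyl : h.lvl py = m := by have := h.arc_lvl' hpyA; omega
  have hpyP : py ∈ P := mem_Pred.2 ⟨hpyV, Relation.ReflTransGen.single hpyA⟩
  have hsibsub : sib ⊆ (chld T py).erase y := by
    intro u hu
    obtain ⟨huoff, hulvl⟩ := Finset.mem_filter.1 hu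
    obtain ⟨huV, hunP, p, hpP, harc⟩ := mem_offQ.1 huoff
    have hplvl : h.lvl p = m := by have := h.arc_lvl' harc; omega
    have hppy : p = py :=
      h.pred_unique_lvl (h.lvl y) y hyT rfl p hpP py hpyP (by omega)
    subst hppy
    refine Finset.mem_erase.2 ⟨?_, mem_chld.2 ⟨huV, harc⟩⟩
    exact fun e => hunP (e ▸ h.pred_self hyT)
  have hcardRmv : (G.Rmv y).card ≤ m + c + 1 := by
    rw [hRmvEq]
    have h1 : sib.card ≤ c - 1 := by
      calc sib.card ≤ ((chld T py).erase y).card := Finset.card_le_card hsibsub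
      _ = (chld T py).card - 1 := Finset.card_erase_of_mem (mem_chld.2 ⟨hyT, hpyA⟩)
      _ = c - 1 := by rw [h.childc py hpyV hpyl]
    calc (P ∪ sib).card ≤ P.card + sib.card := Finset.card_union_le _ _
    _ ≤ (m + 2) + (c - 1) := by omega
    _ ≤ m + c + 1 := by omega
  have hyRmv : y ∈ G.Rmv y := by
    rw [hRmvEq]; exact Finset.mem_union_left _ (h.pred_self hyT)
  have hRmvsub : G.Rmv y ⊆ G.V := by
    rw [hRmvEq]
    intro z hz
    rcases Finset.mem_union.1 hz with hz | hz
    · exact hD.V_local hTmem (hPsub hz)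
    · exact hD.V_local hTmem (mem_offQ.1 (Finset.mem_filter.1 hz).1).1
  -- second splitting
  have hQ2sub : P ∪ sib ⊆ T.V := by
    intro z hz
    rcases Finset.mem_union.1 hz with hz | hz
    · exact hPsub hz
    · exact (mem_offQ.1 (Finset.mem_filter.1 hz).1).1
  have hQ2cl : ∀ a b, (a, b) ∈ T.A → b ∈ P ∪ sib → a ∈ P ∪ sib := by
    intro a b hab hb
    rcases Finset.mem_union.1 hb with hb | hb
    · exact Finset.mem_union_left _ (hPcl a b hab hb)
    · obtain ⟨hboff, hblvl⟩ := Finset.mem_filter.1 hb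
      obtain ⟨hbV, hbnP, p, hpP, harc⟩ := mem_offQ.1 hboff
      obtain ⟨pp, _, huniq⟩ := h.parent_ex b hbV (by omega)
      have hap : a = p := by rw [huniq a hab, huniq p harc]
      exact Finset.mem_union_left _ (hap ▸ hpP)
  have hQ2root : ∀ z ∈ T.V, h.lvl z = 0 → z ∈ P ∪ sib :=
    fun z hz h0 => Finset.mem_union_left _ (hProot z hz h0)
  have hD2 := h.split hD hQ2sub hQ2cl hQ2root
  have hoffQ2 : offQ T (P ∪ sib) = (offQ T P).filter (fun u => h.lvl u ≤ m) := by
    ext u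
    rw [Finset.mem_filter, mem_offQ, mem_offQ]
    constructor
    · rintro ⟨huV, hunQ2, p, hpQ2, harc⟩
      have hunP : u ∉ P := fun hcon => hunQ2 (Finset.mem_union_left _ hcon)
      have hpP : p ∈ P := by
        rcases Finset.mem_union.1 hpQ2 with hp | hp
        · exact hp
        · exfalso
          have hplvl : h.lvl p = m + 1 := (Finset.mem_filter.1 hp).2
          have := h.arc_lvl' harc
          have := h.lvl_le u huV
          omega
      have hule : h.lvl u ≤ m := by
        by_contra hgt
        have hbnd := h.lvl_le u huV
        have heq : h.lvl u = m + 1 := by omega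
        exact hunQ2 (Finset.mem_union_right _
          (Finset.mem_filter.2 ⟨mem_offQ.2 ⟨huV, hunP, p, hpP, harc⟩, heq⟩))
      exact ⟨⟨huV, hunP, p, hpP, harc⟩, hule⟩
    · rintro ⟨⟨huV, hunP, p, hpP, harc⟩, hule⟩
      refine ⟨huV, ?_, p, Finset.mem_union_left _ hpP, harc⟩
      intro hcon
      rcases Finset.mem_union.1 hcon with hcon | hcon
      · exact hunP hcon
      · have := (Finset.mem_filter.1 hcon).2; omega
  refine ⟨s ++ t, (offQ T (P ∪ sib)).toList.map (fun u => (m - h.lvl u, piece T u)), m,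
    ?_, ?_, ?_, hcardRmv, Finset.card_pos.2 ⟨y, hyRmv⟩, hRmvsub, ?_⟩
  · -- Forest
    constructor
    · intro p hp
      rcases List.mem_append.1 hp with hp | hp
      · exact hF.1 p (hmem_st p hp)
      · obtain ⟨u, hu, rfl⟩ := List.mem_map.1 hp
        have huoff := Finset.mem_toList.1 hu
        have hule : h.lvl u ≤ m := by
          rw [hoffQ2] at huoff
          exact (Finset.mem_filter.1 huoff).2
        have huV : u ∈ T.V := (mem_offQ.1 huoff).1
        exact treeData_isTnc (h.piece_data huV hule)
    · have hmapeq : List.map Prod.snd ((s ++ t) ++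
          (offQ T (P ∪ sib)).toList.map (fun u => (m - h.lvl u, piece T u))) =
          s.map Prod.snd ++ t.map Prod.snd ++ (offQ T (P ∪ sib)).toList.map (piece T) := by
        simp [Function.comp]
      rw [hmapeq, Pos.move, hRmvEq]
      exact hD2
  · rw [hsplit, Phi_append, Phi_cons, Phi_append]
    simp
    omega
  · -- potential of the new pieces
    have e1 : Phi c ((offQ T (P ∪ sib)).toList.map (fun u => (m - h.lvl u, piece T u))) =
        ∑ u ∈ offQ T (P ∪ sib), wfun c (m - h.lvl u) := by
      rw [Phi, List.map_map]
      exact Finset.sum_map_toList _ _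
    have hbi : offQ T (P ∪ sib) = (Finset.range m).biUnion
        (fun k => (offQ T (P ∪ sib)).filter (fun u => h.lvl u = k + 1)) := by
      ext u
      simp only [Finset.mem_biUnion, Finset.mem_range, Finset.mem_filter]
      constructor
      · intro hu
        have h1 := (h.off_lvl hu).1
        have h2 : h.lvl u ≤ m := by
          rw [hoffQ2] at hu
          exact (Finset.mem_filter.1 hu).2
        exact ⟨h.lvl u - 1, by omega, hu, by omega⟩
      · rintro ⟨k, _, hu, _⟩; exact hu
    have hdisj : (↑(Finset.range m) : Set ℕ).PairwiseDisjoint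
        (fun k => (offQ T (P ∪ sib)).filter (fun u => h.lvl u = k + 1)) := by
      intro a _ b _ hab
      simp only [Function.onFun]
      rw [Finset.disjoint_left]
      rintro u hu1 hu2
      have e1 := (Finset.mem_filter.1 hu1).2
      have e2 := (Finset.mem_filter.1 hu2).2
      exact hab (by omega)
    have hcardk : ∀ k < m,
        ((offQ T (P ∪ sib)).filter (fun u => h.lvl u = k + 1)).card ≤ 2 := by
      intro k hk
      obtain ⟨ak, hakP, hakl⟩ := h.pred_surj (h.lvl y) y hyT rfl k (by omega)
      obtain ⟨ak1, hak1P, hak1l⟩ := h.pred_surj (h.lvl y) y hyT rfl (k + 1) (by omega)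
      have hakV := pred_subset hakP
      have hak1V := pred_subset hak1P
      obtain ⟨pk, hpkA, hpkuniq⟩ := h.parent_ex ak1 hak1V (by omega)
      have hpkP : pk ∈ P := hPcl pk ak1 hpkA hak1P
      have hpkl : h.lvl pk = k := by have := h.arc_lvl' hpkA; omega
      have hpkak : pk = ak :=
        h.pred_unique_lvl (h.lvl y) y hyT rfl pk hpkP ak hakP (by omega)
      rw [hpkak] at hpkA
      have hsub2 : (offQ T (P ∪ sib)).filter (fun u => h.lvl u = k + 1) ⊆
          (chld T ak).erase ak1 := by
        intro u hu
        obtain ⟨huoff, hulvl⟩ := Finset.mem_filter.1 hu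
        rw [hoffQ2] at huoff
        obtain ⟨huoffP, _⟩ := Finset.mem_filter.1 huoff
        obtain ⟨huV, hunP, p, hpP, harc⟩ := mem_offQ.1 huoffP
        have hpl : h.lvl p = k := by have := h.arc_lvl' harc; omega
        have hpak : p = ak :=
          h.pred_unique_lvl (h.lvl y) y hyT rfl p hpP ak hakP (by omega)
        exact Finset.mem_erase.2 ⟨fun e => hunP (e ▸ hak1P),
          mem_chld.2 ⟨huV, hpak ▸ harc⟩⟩
      calc ((offQ T (P ∪ sib)).filter (fun u => h.lvl u = k + 1)).card
          ≤ ((chld T ak).erase ak1).card := Finset.card_le_card hsub2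
      _ = (chld T ak).card - 1 := Finset.card_erase_of_mem (mem_chld.2 ⟨hak1V, hpkA⟩)
      _ ≤ 2 := by rw [h.child3 ak hakV (by omega)]
    rw [e1, hbi, Finset.sum_biUnion hdisj]
    calc ∑ k ∈ Finset.range m, ∑ u ∈ (offQ T (P ∪ sib)).filter (fun u => h.lvl u = k + 1),
            wfun c (m - h.lvl u)
        ≤ ∑ k ∈ Finset.range m, 2 * wfun c (m - (k + 1)) := by
          apply Finset.sum_le_sum
          intro k hk
          have hcong : ∀ u ∈ (offQ T (P ∪ sib)).filter (fun u => h.lvl u = k + 1),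
              wfun c (m - h.lvl u) = wfun c (m - (k + 1)) := by
            intro u hu
            rw [(Finset.mem_filter.1 hu).2]
          rw [Finset.sum_congr rfl hcong, Finset.sum_const, smul_eq_mul]
          exact Nat.mul_le_mul_right _ (hcardk k (Finset.mem_range.1 hk))
      _ = 2 * ∑ k ∈ Finset.range m, wfun c (m - 1 - k) := by
          rw [Finset.mul_sum]
          exact Finset.sum_congr rfl (fun k _ => by rw [show m - (k + 1) = m - 1 - k from by omega])
      _ = 2 * ∑ j ∈ Finset.range m, wfun c j := by rw [Finset.sum_range_reflect]
  · -- a component of depth m - 1 exists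
    intro hm
    obtain ⟨a0, ha0P, ha0l⟩ := h.pred_surj (h.lvl y) y hyT rfl 0 (by omega)
    obtain ⟨a1, ha1P, ha1l⟩ := h.pred_surj (h.lvl y) y hyT rfl 1 (by omega)
    have ha0V := pred_subset ha0P
    have ha1V := pred_subset ha1P
    obtain ⟨pk, hpkA, _⟩ := h.parent_ex a1 ha1V (by omega)
    have hpkP : pk ∈ P := hPcl pk a1 hpkA ha1P
    have hpkl : h.lvl pk = 0 := by have := h.arc_lvl' hpkA; omega
    have hpka0 : pk = a0 :=
      h.pred_unique_lvl (h.lvl y) y hyT rfl pk hpkP a0 ha0P (by omega)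
    rw [hpka0] at hpkA
    have hch : (chld T a0).card = 3 := h.child3 a0 ha0V (by omega)
    have hne : ((chld T a0).erase a1).Nonempty := by
      rw [← Finset.card_pos, Finset.card_erase_of_mem (mem_chld.2 ⟨ha1V, hpkA⟩), hch]
      omega
    obtain ⟨u, hu⟩ := hne
    obtain ⟨hua1, huch⟩ := Finset.mem_erase.1 hu
    obtain ⟨huV, harc⟩ := mem_chld.1 huch
    have hul : h.lvl u = 1 := by have := h.arc_lvl' harc; omega
    have hunP : u ∉ P := by
      intro hcon
      exact hua1 (h.pred_unique_lvl (h.lvl y) y hyT rfl u hcon a1 ha1P (by omega))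
    have huoff : u ∈ offQ T (P ∪ sib) := by
      rw [hoffQ2]
      exact Finset.mem_filter.2 ⟨mem_offQ.2 ⟨huV, hunP, a0, ha0P, harc⟩, by omega⟩
    refine ⟨(m - h.lvl u, piece T u), List.mem_map.2 ⟨u, Finset.mem_toList.2 huoff, rfl⟩, ?_⟩
    simp [hul]
lemma forest_V_empty {c : ℕ} (hc : 1 ≤ c) {l : List (ℕ × Pos ℕ)} {G : Pos ℕ}
    (hF : Forest c l G) (hR : ¬ G.R.Nonempty) : G.V = ∅ := by
  rw [Finset.eq_empty_iff_forall_notMem]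
  intro z hz
  obtain ⟨p, hp, hzp⟩ := (hF.2.memV z).1 hz
  obtain ⟨q, hql, rfl⟩ := List.mem_map.1 hp
  have h : TreeData q.1 c q.2 := (isTnc_treeData (hF.1 q hql)).some
  obtain ⟨w, hw, hwl⟩ := h.descend hc (q.1 + 1 - h.lvl z) z hzp le_rfl
  have hwV : w ∈ q.2.V := succ_subset hw
  have hwnl : w ∉ q.2.left := by
    intro hcon
    have := ((h.left_iff w).1 hcon).2
    omega
  exact hR ⟨w, (hF.2.R_local hp hwV).2 (mem_R.2 ⟨hwV, hwnl⟩)⟩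

/-- Main bound: playing second on a forest of full trees, Left gets everything
except at most the total potential. -/
lemma main_bound {c : ℕ} (hc : 1 ≤ c) :
    ∀ k, ∀ G : Pos ℕ, ∀ l : List (ℕ × Pos ℕ), Forest c l G → G.V.card ≤ k →
      G.V.card ≤ Pos.sL2Aux k G + Phi c l := by
  intro k
  induction k using Nat.strong_induction_on with
  | _ k ih =>
    intro G l hF hcard
    cases k with
    | zero => exact le_trans hcard (Nat.zero_le _)
    | succ k =>
      rw [Pos.sL2Aux]
      by_cases hR : G.R.Nonempty
      case neg =>
        rw [dif_neg hR]
        have hV : G.V = ∅ := forest_V_empty hc hF hR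
        rw [hV]
        simp
      case pos =>
        rw [dif_pos hR]
        obtain ⟨y0, hy0, heq⟩ := Finset.exists_mem_eq_inf' hR
          (fun y => Pos.sL1Aux k (G.move y))
        rw [heq]
        obtain ⟨lo, lp, m, hF', hPhi_l, hPhi_lp, hrmv_le, hrmv_ge, hrmv_sub, hdeep⟩ :=
          right_move hc hF hy0
        have hcard_y : (G.move y0).V.card + (G.Rmv y0).card = G.V.card := by
          have h1 : (G.move y0).V = G.V \ G.Rmv y0 := rfl
          have h2 := Finset.card_le_card hrmv_sub
          rw [h1, Finset.card_sdiff_of_subset hrmv_sub]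
          omega
        rcases eq_or_ne (lo ++ lp) ([] : List (ℕ × Pos ℕ)) with hnil | hnil
        · have hVempty : (G.move y0).V = ∅ := by
            rw [Finset.eq_empty_iff_forall_notMem]
            intro z hz
            obtain ⟨p, hp, _⟩ := (hF'.2.memV z).1 hz
            rw [hnil] at hp
            simp at hp
          have h1 : G.V.card ≤ m + c + 1 := by
            rw [← hcard_y, hVempty]
            simpa using hrmv_le
          have h2 : wfun c m ≤ Phi c l := by rw [hPhi_l]; omega
          have h3 := wfun_ge c m
          omega
        · obtain ⟨⟨M, T'⟩, hMmem, hMmax⟩ := exists_max_fst (lo ++ lp) hnil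
          obtain ⟨x, hxleft, lo2, hRmvx, hF'', hPhi2, hT'sub, hT'card⟩ :=
            left_move hc hF' hMmem
          have hk1 : 1 ≤ k := by
            have h4 : 1 ≤ (G.move y0).V.card :=
              le_trans hT'card (Finset.card_le_card hT'sub)
            omega
          obtain ⟨k', rfl⟩ : ∃ k', k = k' + 1 := ⟨k - 1, by omega⟩
          have hL1 : ((G.move y0).Rmv x).card + Pos.sL2Aux k' ((G.move y0).move x) ≤
              Pos.sL1Aux (k' + 1) (G.move y0) := by
            have hne : (G.move y0).left.Nonempty := ⟨x, hxleft⟩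
            rw [Pos.sL1Aux, if_pos hne]
            exact Finset.le_sup
              (f := fun z => ((G.move y0).Rmv z).card + Pos.sL2Aux k' ((G.move y0).move z))
              hxleft
          rw [hRmvx] at hL1
          have hcard_x : ((G.move y0).move x).V.card + T'.V.card = (G.move y0).V.card := by
            have h1 : ((G.move y0).move x).V = (G.move y0).V \ T'.V := by
              rw [Pos.move, hRmvx]; rfl
            have h2 := Finset.card_le_card hT'sub
            rw [h1, Finset.card_sdiff_of_subset hT'sub]
            omega
          have hihcard : ((G.move y0).move x).V.card ≤ k' := by omega
          have hIH := ih k' (by omega) ((G.move y0).move x) lo2 hF'' hihcard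
          have hPhiM : Phi c lo + Phi c lp = Phi c lo2 + wfun c M := by
            rw [← Phi_append]; exact hPhi2
          have hkey : (G.Rmv y0).card + Phi c lo2 ≤ Phi c l := by
            rw [hPhi_l]
            rcases Nat.eq_zero_or_pos m with hm0 | hm
            · subst hm0
              have h5 : Phi c lp = 0 := by simpa using hPhi_lp
              have h6 : wfun c 0 = c + 1 := rfl
              omega
            · obtain ⟨p, hpl, hp1⟩ := hdeep hm
              have hMge : m - 1 ≤ M := by
                have := hMmax p (List.mem_append_right _ hpl)
                omega
              have hwM : wfun c (m - 1) ≤ wfun c M := wfun_mono c hMge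
              have hkey2 := wfun_key c (m - 1)
              have hmm : m - 1 + 1 = m := by omega
              rw [hmm] at hkey2
              omega
          calc G.V.card
              = (G.Rmv y0).card + T'.V.card + ((G.move y0).move x).V.card := by omega
          _ ≤ (G.Rmv y0).card + T'.V.card +
                (Pos.sL2Aux k' ((G.move y0).move x) + Phi c lo2) := by omega
          _ ≤ (G.Rmv y0).card + Pos.sL1Aux (k' + 1) (G.move y0) + Phi c lo2 := by omega
          _ ≤ Pos.sL1Aux (k' + 1) (G.move y0) + Phi c l := by omega
open Classical in
noncomputable def lvlSet (T : Pos ℕ) (f : ℕ → ℕ) (k : ℕ) : Finset ℕ :=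
  T.V.filter (fun v => f v = k)

lemma mem_lvlSet {T : Pos ℕ} {f : ℕ → ℕ} {k v : ℕ} :
    v ∈ lvlSet T f k ↔ v ∈ T.V ∧ f v = k := by simp [lvlSet]

namespace TreeData

variable {n c : ℕ} {T : Pos ℕ}

lemma lvl0_card (h : TreeData n c T) : (lvlSet T h.lvl 0).card = 1 := by
  obtain ⟨r, ⟨hrV, hr0⟩, huniq⟩ := h.root_ex
  have : lvlSet T h.lvl 0 = {r} := by
    ext z
    rw [mem_lvlSet, Finset.mem_singleton]
    constructor
    · rintro ⟨hzV, hz0⟩; exact huniq z ⟨hzV, hz0⟩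
    · rintro rfl; exact ⟨hrV, hr0⟩
  rw [this, Finset.card_singleton]

lemma lvl_step (h : TreeData n c T) (k : ℕ) (hk : k ≤ n) :
    (lvlSet T h.lvl (k + 1)).card = (if k < n then 3 else c) * (lvlSet T h.lvl k).card := by
  classical
  have hset : lvlSet T h.lvl (k + 1) = (lvlSet T h.lvl k).biUnion (fun v => chld T v) := by
    ext w
    simp only [mem_lvlSet, Finset.mem_biUnion]
    constructor
    · rintro ⟨hwV, hwl⟩
      obtain ⟨u, hu, _⟩ := h.parent_ex w hwV (by omega)
      have huV := (h.arcV hu).1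
      have hul : h.lvl u = k := by have := h.arc_lvl' hu; omega
      exact ⟨u, ⟨huV, hul⟩, mem_chld.2 ⟨hwV, hu⟩⟩
    · rintro ⟨v, hv, hw⟩
      obtain ⟨hvV, hvl⟩ := hv
      obtain ⟨hwV, harc⟩ := mem_chld.1 hw
      have := h.arc_lvl' harc
      exact ⟨hwV, by omega⟩
  have hdisj : ∀ v ∈ lvlSet T h.lvl k, ∀ v' ∈ lvlSet T h.lvl k, v ≠ v' →
      Disjoint (chld T v) (chld T v') := by
    intro v hv v' hv' hne
    rw [Finset.disjoint_left]
    intro w hw hw'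
    obtain ⟨hwV, harc⟩ := mem_chld.1 hw
    obtain ⟨_, harc'⟩ := mem_chld.1 hw'
    have hwl : 0 < h.lvl w := by have := h.arc_lvl' harc; omega
    obtain ⟨u, _, huniq⟩ := h.parent_ex w hwV hwl
    exact hne (by rw [huniq v harc, huniq v' harc'])
  rw [hset, Finset.card_biUnion hdisj]
  have hcong : ∀ v ∈ lvlSet T h.lvl k, (chld T v).card = (if k < n then 3 else c) := by
    intro v hv
    obtain ⟨hvV, hvl⟩ := mem_lvlSet.1 hv
    by_cases hlt : k < n
    · rw [if_pos hlt]; exact h.child3 v hvV (by omega)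
    · rw [if_neg hlt]; exact h.childc v hvV (by omega)
  rw [Finset.sum_congr rfl hcong, Finset.sum_const, smul_eq_mul, Nat.mul_comm]

lemma lvl_card (h : TreeData n c T) : ∀ k ≤ n, (lvlSet T h.lvl k).card = 3 ^ k := by
  intro k
  induction k with
  | zero => intro _; simpa using h.lvl0_card
  | succ k ihk =>
    intro hk
    rw [h.lvl_step k (by omega), if_pos (by omega), ihk (by omega), pow_succ,
      Nat.mul_comm]

lemma leaf_card (h : TreeData n c T) : (lvlSet T h.lvl (n + 1)).card = c * 3 ^ n := by
  rw [h.lvl_step n le_rfl, if_neg (by omega), h.lvl_card n le_rfl]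

lemma left_card (h : TreeData n c T) :
    T.left.card = ∑ k ∈ Finset.range (n + 1), 3 ^ k := by
  classical
  have hset : T.left = (Finset.range (n + 1)).biUnion (fun k => lvlSet T h.lvl k) := by
    ext v
    simp only [Finset.mem_biUnion, Finset.mem_range, mem_lvlSet, h.left_iff v]
    constructor
    · rintro ⟨hvV, hvl⟩; exact ⟨h.lvl v, by omega, hvV, rfl⟩
    · rintro ⟨k, hk, hvV, hvl⟩; exact ⟨hvV, by omega⟩
  have hdisj : ∀ a ∈ Finset.range (n + 1), ∀ b ∈ Finset.range (n + 1), a ≠ b →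
      Disjoint (lvlSet T h.lvl a) (lvlSet T h.lvl b) := by
    intro a _ b _ hab
    rw [Finset.disjoint_left]
    intro v hv hv'
    exact hab (by rw [← (mem_lvlSet.1 hv).2, ← (mem_lvlSet.1 hv').2])
  rw [hset, Finset.card_biUnion hdisj]
  exact Finset.sum_congr rfl (fun k hk => h.lvl_card k (by
    have := Finset.mem_range.1 hk; omega))

lemma V_card (h : TreeData n c T) : T.V.card = T.left.card + c * 3 ^ n := by
  classical
  have hset : T.V = T.left ∪ lvlSet T h.lvl (n + 1) := by
    ext v
    rw [Finset.mem_union, mem_lvlSet, h.left_iff v]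
    constructor
    · intro hv
      have := h.lvl_le v hv
      rcases Nat.lt_or_ge (h.lvl v) (n + 1) with hlt | hge
      · exact Or.inl ⟨hv, by omega⟩
      · exact Or.inr ⟨hv, by omega⟩
    · rintro (⟨hv, _⟩ | ⟨hv, _⟩) <;> exact hv
  have hdisj : Disjoint T.left (lvlSet T h.lvl (n + 1)) := by
    rw [Finset.disjoint_left]
    intro v hv hv'
    have h1 := (h.left_iff v).1 hv
    have h2 := (mem_lvlSet.1 hv').2
    omega
  rw [hset, Finset.card_union_of_disjoint hdisj, h.leaf_card]

end TreeData
end Influence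

open Influence Influence.Pos Finset

/-- position can beat number: for every `ε > 0` there are `c ≥ 1` and `N`
such that for all `n ≥ N` the game `J^c_n` has a proportion of Left vertices at most `ε`
while Left, playing second, wins a proportion at least `1 − ε` of all vertices. -/
theorem influence_position_beats_number (ε : ℝ) (hε : 0 < ε) :
    ∃ c : ℕ, 1 ≤ c ∧ ∃ N : ℕ, ∀ n : ℕ, N ≤ n → ∀ J : Pos ℕ, IsJnc n c J →
      (J.left.card : ℝ) / (J.V.card : ℝ) ≤ ε ∧
      1 - ε ≤ (J.sL2 : ℝ) / (J.V.card : ℝ) := by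
  obtain ⟨N, hN⟩ := exists_pow_lt_of_lt_one (show (0:ℝ) < ε/2 by linarith)
    (show (8:ℝ)/9 < 1 by norm_num)
  refine ⟨⌈(3:ℝ)/ε⌉₊ + 2, by omega, N, ?_⟩
  intro n hn J hJ
  set c : ℕ := ⌈(3:ℝ)/ε⌉₊ + 2 with hcdef
  have hc1 : 1 ≤ c := by omega
  obtain ⟨T1, T2, hT1, hT2, hdisj, rfl⟩ := hJ
  have h1 : TreeData n c T1 := (isTnc_treeData hT1).some
  have h2 : TreeData n c T2 := (isTnc_treeData hT2).some
  -- cardinalities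
  have hVeq : (T1.union T2).V = T1.V ∪ T2.V := rfl
  have hLeq : (T1.union T2).left = T1.left ∪ T2.left := rfl
  have hsub1 : T1.left ⊆ T1.V := h1.wf.2
  have hsub2 : T2.left ⊆ T2.V := h2.wf.2
  have hldisj : Disjoint T1.left T2.left := hdisj.mono hsub1 hsub2
  set S : ℕ := ∑ k ∈ Finset.range (n+1), 3^k with hSdef
  have hL1 : T1.left.card = S := h1.left_card
  have hL2 : T2.left.card = S := h2.left_card
  have hV1 : T1.V.card = S + c * 3^n := by rw [h1.V_card, hL1]
  have hV2 : T2.V.card = S + c * 3^n := by rw [h2.V_card, hL2]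
  have hLcard : (T1.union T2).left.card = 2 * S := by
    rw [hLeq, Finset.card_union_of_disjoint hldisj, hL1, hL2]; ring
  have hVcard : (T1.union T2).V.card = 2 * S + 2 * (c * 3^n) := by
    rw [hVeq, Finset.card_union_of_disjoint hdisj, hV1, hV2]; ring
  have hgeo : 2 * S + 1 = 3^(n+1) := geom_sum3 (n+1)
  have hgeo' : 2 * S + 1 = 3 * 3^n := by rw [hgeo, pow_succ]; ring
  have h3pos : (1:ℕ) ≤ 3^n := Nat.one_le_pow _ _ (by omega)
  have hVpos : (0:ℝ) < ((T1.union T2).V.card : ℝ) := by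
    have hcard1 : 1 ≤ (T1.union T2).V.card := by
      rw [hVcard]
      have : 1 ≤ c * 3^n := Nat.mul_pos (by omega) (by omega)
      omega
    exact_mod_cast Nat.lt_of_lt_of_le Nat.zero_lt_one hcard1
  have hApos : (0:ℝ) < (3:ℝ)^n := pow_pos (by norm_num) n
  have hVge : (2:ℝ) * c * 3^n ≤ ((T1.union T2).V.card : ℝ) := by
    rw [hVcard]
    push_cast
    have : (0:ℝ) ≤ (S:ℝ) := Nat.cast_nonneg S
    nlinarith
  constructor
  · -- proportion of Left vertices
    rw [div_le_iff₀ hVpos]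
    have hLle : (((T1.union T2).left.card : ℕ) : ℝ) ≤ 3 * 3^n := by
      have : (T1.union T2).left.card ≤ 3 * 3^n := by rw [hLcard]; omega
      calc (((T1.union T2).left.card : ℕ) : ℝ) ≤ ((3 * 3^n : ℕ) : ℝ) := by exact_mod_cast this
      _ = 3 * 3^n := by push_cast; ring
    have hεc : (3:ℝ) ≤ ε * c := by
      have hle : (3:ℝ)/ε ≤ (c:ℝ) := by
        refine le_trans (Nat.le_ceil _) ?_
        exact_mod_cast Nat.cast_le.2 (by omega : ⌈(3:ℝ)/ε⌉₊ ≤ c)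
      calc (3:ℝ) = ε * (3/ε) := by field_simp
      _ ≤ ε * c := mul_le_mul_of_nonneg_left hle (le_of_lt hε)
    have t1 : (3:ℝ) * 3^n ≤ (ε * c) * 3^n :=
      mul_le_mul_of_nonneg_right hεc hApos.le
    have t2 : ε * (2 * c * 3^n) ≤ ε * ((T1.union T2).V.card : ℝ) :=
      mul_le_mul_of_nonneg_left hVge hε.le
    have t3 : (0:ℝ) ≤ (ε * c) * 3^n := by positivity
    nlinarith [t1, t2, t3, hLle]
  · -- Left's score playing second
    have hF : Forest c [(n, T1), (n, T2)] (T1.union T2) := by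
      constructor
      · intro p hp
        rcases List.mem_cons.1 hp with rfl | hp
        · exact hT1
        rcases List.mem_cons.1 hp with rfl | hp
        · exact hT2
        · simp at hp
      · constructor
        · intro p hp
          rcases List.mem_cons.1 hp with rfl | hp
          · exact hT1.1
          rcases List.mem_cons.1 hp with rfl | hp
          · exact hT2.1
          · simp at hp
        · refine List.Pairwise.cons ?_ (List.Pairwise.cons ?_ List.Pairwise.nil)
          · intro b hb
            rcases List.mem_cons.1 hb with rfl | hb
            · exact hdisj
            · simp at hb
          · intro b hb
            simp at hb
        · intro z
          show z ∈ T1.V ∪ T2.V ↔ _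
          rw [Finset.mem_union]
          simp
        · intro a b
          show (a, b) ∈ T1.A ∪ T2.A ↔ _
          rw [Finset.mem_union]
          simp
        · intro z
          show z ∈ T1.left ∪ T2.left ↔ _
          rw [Finset.mem_union]
          simp
    have hmain := main_bound hc1 ((T1.union T2).V.card) _ _ hF le_rfl
    have hPhi : Phi c [(n, T1), (n, T2)] = 2 * wfun c n := by
      simp [Phi]; ring
    rw [hPhi] at hmain
    have hbound : ((T1.union T2).V.card : ℝ) ≤ ((T1.union T2).sL2 : ℝ) + 2 * wfun c n := by
      have : (T1.union T2).V.card ≤ (T1.union T2).sL2 + 2 * wfun c n := hmain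
      exact_mod_cast this
    -- 2 * wfun c n ≤ ε * Vc
    have hwR : (3:ℝ)^n * (wfun c n : ℝ) ≤ ((c:ℝ) + 1) * 8^n := by
      exact_mod_cast wfun_pow_le c hc1 n
    have hpow : ((8:ℝ)/9)^n ≤ ε/2 :=
      le_trans (pow_le_pow_of_le_one (by norm_num) (by norm_num) hn) hN.le
    have h9pos : (0:ℝ) < 9^n := pow_pos (by norm_num) n
    have h8 : (8:ℝ)^n ≤ ε/2 * 9^n := by
      rw [div_pow] at hpow
      exact (div_le_iff₀ h9pos).1 hpow
    have h9eq : (9:ℝ)^n = 3^n * 3^n := by rw [← mul_pow]; norm_num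
    have hcR : (2:ℝ) ≤ (c:ℝ) := by exact_mod_cast (by omega : 2 ≤ c)
    have hkey : 2 * (wfun c n : ℝ) ≤ ε * ((T1.union T2).V.card : ℝ) := by
      have s1 : 2 * ((3:ℝ)^n * (wfun c n : ℝ)) ≤ 2 * (((c:ℝ) + 1) * 8^n) := by
        linarith
      have s2 : ((c:ℝ) + 1) * (8:ℝ)^n ≤ ((c:ℝ) + 1) * (ε/2 * (3^n * 3^n)) := by
        rw [← h9eq]
        exact mul_le_mul_of_nonneg_left h8 (by linarith)
      have s3a : ε * ((c:ℝ) + 1) ≤ ε * (2 * c) :=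
        mul_le_mul_of_nonneg_left (by linarith) hε.le
      have s3 : ε * ((c:ℝ) + 1) * (3^n * 3^n) ≤ ε * (2 * c) * (3^n * 3^n) :=
        mul_le_mul_of_nonneg_right s3a (by positivity)
      have s4 : ε * (2 * (c:ℝ) * 3^n) ≤ ε * ((T1.union T2).V.card : ℝ) :=
        mul_le_mul_of_nonneg_left hVge hε.le
      have s5 : ε * (2 * (c:ℝ) * 3^n) * 3^n ≤ ε * ((T1.union T2).V.card : ℝ) * 3^n :=
        mul_le_mul_of_nonneg_right s4 hApos.le
      have hfin : 2 * (wfun c n : ℝ) * 3^n ≤ ε * ((T1.union T2).V.card : ℝ) * 3^n := by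
        nlinarith [s1, s2, s3, s5]
      exact le_of_mul_le_mul_right hfin hApos
    rw [le_div_iff₀ hVpos]
    linarith [hkey, hbound]
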